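/- arXiv:1009.1647 — 5 statements merged into one kernel-verified Lean document; each statement's English description precedes it below -/
import Mathlib

section
/- Let G be a group with a convergence group action on a compact metrizable space M with at least three points, and let H be a dynamically quasiconvex subgroup of G with |Λ(H)| ≥ 2. Then for any g ∈ G \ H, the inclusion gHg⁻¹ ⊆ H implies gHg⁻¹ = H. -/
open Pointwise Filter Topology Set

section ConvergenceGroups

variable (G M : Type*) [Group G] [TopologicalSpace M] [MulAction G M]

/-- A convergence group action: the action is by homeomorphisms (each element acts
continuously, hence as a homeomorphism since the action is by a group), and the induced
diagonal action on the space of distinct triples of points of `M` is properly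
discontinuous. -/
def IsConvergenceAction : Prop :=
  (∀ g : G, Continuous fun x : M => g • x) ∧
    ∀ K L : Set (M × M × M), IsCompact K → IsCompact L →
      (∀ t ∈ K ∪ L, t.1 ≠ t.2.1 ∧ t.1 ≠ t.2.2 ∧ t.2.1 ≠ t.2.2) →
      {g : G | ((g • K) ∩ L).Nonempty}.Finite

/-- The limit set of a subgroup `H ≤ G`: the set of accumulation points in `M` of
the `H`-orbits of points of `M`. -/
def limitSet (H : Subgroup G) : Set M :=
  {x : M | ∃ m : M, x ∈ closure (((fun h : G => h • m) '' (H : Set G)) \ {x})}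

/-- `z` is a conical limit point of the subgroup `H`. -/
def IsConicalLimitPoint (H : Subgroup G) (z : M) : Prop :=
  ∃ (h : ℕ → G) (a b : M), (∀ n, h n ∈ H) ∧ a ≠ b ∧
    Tendsto (fun n => h n • z) atTop (nhds a) ∧
    ∀ q : M, q ≠ z → Tendsto (fun n => h n • q) atTop (nhds b)

/-- `g` is loxodromic: it has infinite order and fixes exactly two points of `M`. -/
def IsLoxodromic (g : G) : Prop :=
  ¬ IsOfFinOrder g ∧ {x : M | g • x = x}.encard = 2

/-- `p` is a bounded parabolic point of the subgroup `H`: its stabilizer in `H` is an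
infinite subgroup containing no loxodromic element, which acts cocompactly on
`Λ(H) \ {p}`. -/
def IsBoundedParabolicPoint (H : Subgroup G) (p : M) : Prop :=
  ((H ⊓ MulAction.stabilizer G p : Subgroup G) : Set G).Infinite ∧
  (∀ g ∈ H ⊓ MulAction.stabilizer G p, ¬ IsLoxodromic G M g) ∧
  ∃ C : Set M, IsCompact C ∧ C ⊆ limitSet G M H \ {p} ∧
    limitSet G M H \ {p} ⊆ ⋃ g ∈ (H ⊓ MulAction.stabilizer G p : Subgroup G), g • C

/-- `H` is dynamically quasiconvex: for every pair of disjoint closed subsets `K, L` of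
`M`, the set of cosets `gH` with `gΛ(H)` meeting both `K` and `L` is finite. -/
def DynamicallyQuasiconvex (H : Subgroup G) : Prop :=
  ∀ K L : Set M, IsClosed K → IsClosed L → Disjoint K L →
    ((fun g : G => (g : G ⧸ H)) ''
      {g : G | ((g • limitSet G M H) ∩ K).Nonempty ∧
               ((g • limitSet G M H) ∩ L).Nonempty}).Finite

end ConvergenceGroups

/-- Auxiliary lemma: if conjugation by `g` maps `H` into `H`, then `g` maps the
limit set of `H` into itself. -/
lemma smul_limitSet_mem {G M : Type*} [Group G] [TopologicalSpace M] [MulAction G M]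
    (cont : ∀ g : G, Continuous fun x : M => g • x)
    (H : Subgroup G) (g : G)
    (hsub : ∀ h ∈ H, g * h * g⁻¹ ∈ H) :
    ∀ x ∈ limitSet G M H, g • x ∈ limitSet G M H := by
  rintro x ⟨m, hx⟩
  refine ⟨g • m, ?_⟩
  let e : M ≃ₜ M :=
    { toFun := fun y => g • y
      invFun := fun y => g⁻¹ • y
      left_inv := fun y => inv_smul_smul g y
      right_inv := fun y => smul_inv_smul g y
      continuous_toFun := cont g
      continuous_invFun := cont g⁻¹ }
  have h1 : g • x ∈ closure
      (⇑e '' (((fun h : G => h • m) '' (H : Set G)) \ {x})) := by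
    rw [← e.image_closure]
    exact ⟨x, hx, rfl⟩
  refine closure_mono ?_ h1
  rintro _ ⟨y, ⟨⟨h, hh, rfl⟩, hy⟩, rfl⟩
  refine ⟨⟨g * h * g⁻¹, hsub h hh, by simp [mul_smul]; rfl⟩, ?_⟩
  simp only [Set.mem_singleton_iff] at hy ⊢
  intro hc
  exact hy (MulAction.injective g hc)

/-- a dynamically quasiconvex subgroup with at least two limit points
cannot properly contain a conjugate of itself. -/
theorem proper_conjugates_of_dynamically_quasiconvex
    {G M : Type*} [Group G] [TopologicalSpace M] [CompactSpace M]
    [TopologicalSpace.MetrizableSpace M] [MulAction G M]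
    (hconv : IsConvergenceAction G M)
    (h3 : ∃ a b c : M, a ≠ b ∧ a ≠ c ∧ b ≠ c)
    (H : Subgroup G) (hdqc : DynamicallyQuasiconvex G M H)
    (hΛ : 2 ≤ (limitSet G M H).encard) :
    ∀ g : G, g ∉ H →
      (fun x : G => g * x * g⁻¹) '' (H : Set G) ⊆ (H : Set G) →
      (fun x : G => g * x * g⁻¹) '' (H : Set G) = (H : Set G) := by
  intro g hg hsub
  classical
  obtain ⟨cont, -⟩ := hconv
  have hsub' : ∀ h ∈ H, g * h * g⁻¹ ∈ H := fun h hh => hsub ⟨h, hh, rfl⟩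
  -- conjugation by powers of `g` maps `H` into `H`
  have hconjpow : ∀ (j : ℕ), ∀ h ∈ H, g ^ j * h * (g ^ j)⁻¹ ∈ H := by
    intro j
    induction j with
    | zero => intro h hh; simpa using hh
    | succ j ih =>
        intro h hh
        have := hsub' _ (ih h hh)
        have heq : g * (g ^ j * h * (g ^ j)⁻¹) * g⁻¹
            = g ^ (j + 1) * h * (g ^ (j + 1))⁻¹ := by
          rw [pow_succ']
          group
        rwa [heq] at this
  -- powers of `g` map the limit set into itself
  have hpowΛ : ∀ (n : ℕ), ∀ x ∈ limitSet G M H, (g ^ n) • x ∈ limitSet G M H := by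
    intro n
    induction n with
    | zero => intro x hx; simpa using hx
    | succ n ih =>
        intro x hx
        have := smul_limitSet_mem cont H g hsub' _ (ih x hx)
        rwa [← mul_smul, ← pow_succ'] at this
  -- two distinct limit points
  obtain ⟨a, b, ha, hb, hab⟩ :=
    Set.one_lt_encard_iff.mp (lt_of_lt_of_le (by norm_num) hΛ)
  -- apply dynamical quasiconvexity to the singletons {a}, {b}
  have hfin := hdqc {a} {b} isClosed_singleton isClosed_singleton
    (Set.disjoint_singleton.mpr hab)
  -- every coset (g⁻¹)^n H lies in the finite set
  have hmem : ∀ n : ℕ, ((((g⁻¹) ^ n : G) : G ⧸ H)) ∈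
      ((fun g : G => (g : G ⧸ H)) ''
        {g : G | ((g • limitSet G M H) ∩ {a}).Nonempty ∧
                 ((g • limitSet G M H) ∩ {b}).Nonempty}) := by
    intro n
    refine ⟨(g⁻¹) ^ n, ⟨⟨a, ?_, rfl⟩, ⟨b, ?_, rfl⟩⟩, rfl⟩
    · exact ⟨g ^ n • a, hpowΛ n a ha, by
        show (g⁻¹) ^ n • g ^ n • a = a
        rw [smul_smul, inv_pow, inv_mul_cancel, one_smul]⟩
    · exact ⟨g ^ n • b, hpowΛ n b hb, by
        show (g⁻¹) ^ n • g ^ n • b = b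
        rw [smul_smul, inv_pow, inv_mul_cancel, one_smul]⟩
  -- hence the map n ↦ (g⁻¹)^n H is not injective
  have hninj : ¬ Function.Injective (fun n : ℕ => (((g⁻¹) ^ n : G) : G ⧸ H)) := by
    intro hinj
    exact Set.infinite_of_injective_forall_mem hinj hmem hfin
  rw [Function.not_injective_iff] at hninj
  obtain ⟨n, m, hnm, hne⟩ := hninj
  -- from coset equality, some positive power of g lies in H
  have hk : ∃ k : ℕ, 1 ≤ k ∧ g ^ k ∈ H := by
    rcases hne.lt_or_gt with hlt | hlt
    · obtain ⟨d, rfl⟩ : ∃ d, m = d + n := ⟨m - n, by omega⟩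
      refine ⟨d, by omega, ?_⟩
      have hmem2 := (QuotientGroup.eq (s := H)).mp hnm
      have heq : ((g⁻¹) ^ n)⁻¹ * (g⁻¹) ^ (d + n) = (g ^ d)⁻¹ := by
        rw [inv_pow, inv_pow, inv_inv, pow_add, mul_inv_rev, ← mul_assoc,
          mul_inv_cancel, one_mul]
      rw [heq] at hmem2
      exact (inv_mem_iff (x := g ^ d)).mp hmem2
    · obtain ⟨d, rfl⟩ : ∃ d, n = d + m := ⟨n - m, by omega⟩
      refine ⟨d, by omega, ?_⟩
      have hmem2 := (QuotientGroup.eq (s := H)).mp hnm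
      have heq : ((g⁻¹) ^ (d + m))⁻¹ * (g⁻¹) ^ m = g ^ d := by
        rw [inv_pow, inv_pow, inv_inv, pow_add, mul_assoc, mul_inv_cancel, mul_one]
      rwa [heq] at hmem2
  obtain ⟨k, hk1, hkH⟩ := hk
  -- chain argument: H ⊆ gHg⁻¹
  refine Set.Subset.antisymm hsub ?_
  intro x hx
  refine ⟨g⁻¹ * x * g, ?_, by group⟩
  obtain ⟨j, rfl⟩ : ∃ j, k = j + 1 := ⟨k - 1, by omega⟩
  have h0 : (g ^ (j + 1))⁻¹ * x * g ^ (j + 1) ∈ H := by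
    exact mul_mem (mul_mem (inv_mem hkH) hx) hkH
  have := hconjpow j _ h0
  have heq : g ^ j * ((g ^ (j + 1))⁻¹ * x * g ^ (j + 1)) * (g ^ j)⁻¹
      = g⁻¹ * x * g := by
    rw [pow_succ]
    group
  rwa [heq] at this
end

section
/- Let G be a finitely generated group with a finite symmetric generating set S whose Floyd boundary ∂G is nontrivial, so that the left-multiplication action of G extends to a convergence group action of G on ∂G. If H is an undistorted finitely generated subgroup of G, then H is dynamically quasiconvex with respect to the action of G on ∂G. -/
open Pointwise Filter Topology Set

section Floyd

variable {G : Type*} [Group G]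

/-- The word metric on `G` determined by a generating set `S`: the length of a shortest
word over `S` representing `x⁻¹ * y`. -/
noncomputable def wordDist (S : Set G) (x y : G) : ℕ :=
  sInf {n : ℕ | ∃ l : List G, (∀ a ∈ l, a ∈ S) ∧ l.prod = x⁻¹ * y ∧ l.length = n}

/-- The Floyd length of the edge of the Cayley graph `Γ(G,S)` joining `x` and `y`:
the edge is rescaled by the factor `f(d_S(1,e)) = d_S(1,e)⁻²` (where `d_S(1,e)` is the
word distance from the identity to the edge, and edges at the identity keep length 1). -/
noncomputable def floydEdgeWeight (S : Set G) (x y : G) : ℝ :=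
  ((max 1 (min (wordDist S 1 x) (wordDist S 1 y)) : ℕ) : ℝ)⁻¹ ^ 2

/-- The Floyd length of an edge path in the Cayley graph, recorded as its list of
vertices: the sum of the rescaled lengths of its edges. -/
noncomputable def floydLength (S : Set G) : List G → ℝ
  | [] => 0
  | [_] => 0
  | a :: b :: l => floydEdgeWeight S a b + floydLength S (b :: l)

/-- `l` is (the list of vertices of) an edge path in the Cayley graph `Γ(G,S)` from `x`
to `y`: consecutive vertices are at word distance 1. -/
def IsEdgePath (S : Set G) (x y : G) (l : List G) : Prop :=
  l.head? = some x ∧ l.getLast? = some y ∧ List.Chain' (fun a b => wordDist S a b = 1) l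

/-- The Floyd metric on `G`: the infimum of Floyd lengths of edge paths joining the two
points. -/
noncomputable def floydDist (S : Set G) (x y : G) : ℝ :=
  sInf {r : ℝ | ∃ l : List G, IsEdgePath S x y l ∧ floydLength S l = r}

/-- The limit set in the Floyd completion `𝔾` (with `ι : G → 𝔾` the canonical map) of a
subgroup `H ≤ G`: the set of accumulation points of the `H`-orbits of points of `G`. -/
def floydLimitSet {𝔾 : Type*} [TopologicalSpace 𝔾] (ι : G → 𝔾) (H : Subgroup G) :
    Set 𝔾 :=
  {x : 𝔾 | ∃ g₀ : G, x ∈ closure (((fun h : G => ι (h * g₀)) '' (H : Set G)) \ {x})}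

/-- `H` (with finite generating set `T`) is undistorted in `G` (with finite generating
set `S`): the inclusion `(H, d_T) → (G, d_S)` is a quasi-isometric embedding. -/
def IsUndistorted (S T : Set G) (H : Subgroup G) : Prop :=
  ∃ ε : ℝ, 1 ≤ ε ∧ ∀ x ∈ H, ∀ y ∈ H,
    ε⁻¹ * (wordDist T x y : ℝ) - ε ≤ (wordDist S x y : ℝ) ∧
    (wordDist S x y : ℝ) ≤ ε * (wordDist T x y : ℝ) + ε

variable {S : Set G}

theorem wordDist_le_word (x y : G) {l : List G} (hl : ∀ a ∈ l, a ∈ S)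
    (hp : l.prod = x⁻¹ * y) : wordDist S x y ≤ l.length :=
  Nat.sInf_le ⟨l, hl, hp, rfl⟩

theorem wordSet_nonempty (hsym : ∀ s ∈ S, s⁻¹ ∈ S) (hgen : Subgroup.closure S = ⊤)
    (x y : G) :
    {n : ℕ | ∃ l : List G, (∀ a ∈ l, a ∈ S) ∧ l.prod = x⁻¹ * y ∧ l.length = n}.Nonempty := by
  have hx : x⁻¹ * y ∈ Subgroup.closure S := by rw [hgen]; trivial
  have hx2 : x⁻¹ * y ∈ (Subgroup.closure S).toSubmonoid := hx
  rw [Subgroup.closure_toSubmonoid] at hx2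
  obtain ⟨l, hl, hp⟩ := Submonoid.exists_list_of_mem_closure hx2
  refine ⟨l.length, l, fun a ha => ?_, hp, rfl⟩
  rcases hl a ha with h | h
  · exact h
  · simpa using hsym _ h

theorem exists_min_word (hsym : ∀ s ∈ S, s⁻¹ ∈ S) (hgen : Subgroup.closure S = ⊤)
    (x y : G) : ∃ l : List G, (∀ a ∈ l, a ∈ S) ∧ l.prod = x⁻¹ * y ∧
      l.length = wordDist S x y :=
  Nat.sInf_mem (wordSet_nonempty hsym hgen x y)

theorem wordDist_triangle (hsym : ∀ s ∈ S, s⁻¹ ∈ S) (hgen : Subgroup.closure S = ⊤)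
    (x y z : G) : wordDist S x z ≤ wordDist S x y + wordDist S y z := by
  obtain ⟨l1, h1, p1, n1⟩ := exists_min_word hsym hgen x y
  obtain ⟨l2, h2, p2, n2⟩ := exists_min_word hsym hgen y z
  have := wordDist_le_word (S := S) x z (l := l1 ++ l2)
    (by intro a ha; rcases List.mem_append.1 ha with h | h; exacts [h1 a h, h2 a h])
    (by rw [List.prod_append, p1, p2]; group)
  simpa [n1, n2] using this

theorem wordDist_mul_left (g x y : G) : wordDist S (g * x) (g * y) = wordDist S x y := by
  unfold wordDist
  congr 1
  ext n
  simp [mul_assoc]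

theorem wordDist_self (x : G) : wordDist S x x = 0 :=
  Nat.le_zero.1 <| by simpa using wordDist_le_word (S := S) x x (l := []) (by simp) (by simp)

theorem eq_of_wordDist_eq_zero {x y : G} (h : wordDist S x y = 0)
    (hne : {n : ℕ | ∃ l : List G, (∀ a ∈ l, a ∈ S) ∧ l.prod = x⁻¹ * y ∧ l.length = n}.Nonempty) :
    x = y := by
  rw [wordDist, Nat.sInf_eq_zero] at h
  rcases h with h | h
  · obtain ⟨l, _, hp, hlen⟩ := h
    rw [List.length_eq_zero_iff] at hlen
    subst hlen
    simp only [List.prod_nil] at hp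
    exact (inv_mul_eq_one.1 hp.symm)
  · exact absurd h (Set.nonempty_iff_ne_empty.1 hne)

theorem wordDist_comm (hsym : ∀ s ∈ S, s⁻¹ ∈ S) (x y : G) :
    wordDist S x y = wordDist S y x := by
  have key : ∀ u v : G,
      {n : ℕ | ∃ l : List G, (∀ a ∈ l, a ∈ S) ∧ l.prod = u⁻¹ * v ∧ l.length = n} ⊆
      {n : ℕ | ∃ l : List G, (∀ a ∈ l, a ∈ S) ∧ l.prod = v⁻¹ * u ∧ l.length = n} := by
    rintro u v n ⟨l, hl, hp, rfl⟩
    refine ⟨(l.map (·⁻¹)).reverse, ?_, ?_, by simp⟩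
    · intro a ha
      simp only [List.mem_reverse, List.mem_map] at ha
      obtain ⟨b, hb, rfl⟩ := ha
      exact hsym _ (hl b hb)
    · rw [← List.prod_inv_reverse, hp]
      group
  unfold wordDist
  rw [Set.Subset.antisymm (key x y) (key y x)]

theorem nm_le_add (hsym : ∀ s ∈ S, s⁻¹ ∈ S) (hgen : Subgroup.closure S = ⊤) (x y : G) :
    wordDist S x y ≤ wordDist S 1 x + wordDist S 1 y := by
  calc wordDist S x y ≤ wordDist S x 1 + wordDist S 1 y := wordDist_triangle hsym hgen _ _ _
  _ = wordDist S 1 x + wordDist S 1 y := by rw [wordDist_comm hsym]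


theorem floydEdgeWeight_nonneg (x y : G) : 0 ≤ floydEdgeWeight S x y := by
  unfold floydEdgeWeight; positivity

theorem floydLength_nonneg : ∀ l : List G, 0 ≤ floydLength S l
  | [] => le_refl _
  | [_] => le_refl _
  | a :: b :: l => add_nonneg (floydEdgeWeight_nonneg a b) (floydLength_nonneg (b :: l))

theorem floydDist_le_length {x y : G} {l : List G} (h : IsEdgePath S x y l) :
    floydDist S x y ≤ floydLength S l :=
  csInf_le ⟨0, fun r ⟨l', _, hl'⟩ => hl' ▸ floydLength_nonneg l'⟩ ⟨l, h, rfl⟩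

open scoped Classical in
theorem prod_filter_ne_one (l : List G) : (l.filter (fun a => a ≠ 1)).prod = l.prod := by
  induction l with
  | nil => simp
  | cons a t ih =>
    by_cases ha : a = 1
    · subst ha; simpa [List.filter_cons] using ih
    · rw [show (fun a : G => decide (a ≠ 1)) = (fun a : G => !decide (a = 1)) by
        funext a; simp] at ih
      simp [List.filter_cons, ha, ih]

theorem scanl_ne_nil (u : G) (l : List G) : List.scanl (· * ·) u l ≠ [] := by
  cases l <;> simp [List.scanl]

/-- remove the `1`s from a word -/
theorem exists_word_no_one {x y : G}
    (hne : {n : ℕ | ∃ l : List G, (∀ a ∈ l, a ∈ S) ∧ l.prod = x⁻¹ * y ∧ l.length = n}.Nonempty) :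
    ∃ l : List G, (∀ a ∈ l, a ∈ S ∧ a ≠ 1) ∧ l.prod = x⁻¹ * y ∧
      l.length = wordDist S x y := by
  classical
  obtain ⟨l, hl, hp, hlen⟩ := Nat.sInf_mem hne
  set l' := l.filter (fun a => a ≠ 1) with hl'
  have hprod : l'.prod = l.prod := prod_filter_ne_one l
  have hmem : ∀ a ∈ l', a ∈ S ∧ a ≠ 1 := by
    intro a ha
    rw [hl', List.mem_filter] at ha
    refine ⟨hl a ha.1, by simpa using ha.2⟩
  have hlen2 : wordDist S x y ≤ l'.length :=
    Nat.sInf_le ⟨l', fun a ha => (hmem a ha).1, by rw [hprod, hp], rfl⟩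
  have hlen3 : l'.length ≤ l.length := List.length_filter_le _ _
  have hlen4 : l.length = wordDist S x y := hlen
  exact ⟨l', hmem, by rw [hprod, hp], le_antisymm (by omega) hlen2⟩

theorem wordDist_le_one {x : G} {a : G} (ha : a ∈ S) : wordDist S x (x * a) ≤ 1 := by
  have : wordDist S x (x * a) ≤ ([a] : List G).length :=
    Nat.sInf_le ⟨[a], by simpa using ha, by simp, rfl⟩
  simpa using this

theorem wordDist_eq_one {x : G} {a : G} (ha : a ∈ S) (ha1 : a ≠ 1) :
    wordDist S x (x * a) = 1 := by
  refine le_antisymm (wordDist_le_one ha) ?_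
  rw [Nat.one_le_iff_ne_zero]
  intro h0
  rw [wordDist, Nat.sInf_eq_zero] at h0
  rcases h0 with h | h
  · obtain ⟨l, _, hp, hlen⟩ := h
    rw [List.length_eq_zero_iff] at hlen; subst hlen
    simp only [List.prod_nil] at hp
    exact ha1 (by simpa using hp.symm)
  · exact absurd h (Set.nonempty_iff_ne_empty.1 ⟨1, [a], by simpa using ha, by simp, rfl⟩)

/-- scanl path facts -/
theorem scanl_head (u : G) (l : List G) :
    (List.scanl (· * ·) u l).head? = some u := by cases l <;> simp [List.scanl]

theorem scanl_getLast (l : List G) : ∀ u : G,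
    (List.scanl (· * ·) u l).getLast? = some (u * l.prod) := by
  induction l with
  | nil => intro u; simp [List.scanl]
  | cons a t ih =>
    intro u
    rw [List.scanl_cons, ← List.singleton_append]
    rw [List.getLast?_append_of_ne_nil _ (scanl_ne_nil (u * a) t), ih (u * a),
      mul_assoc, List.prod_cons]

theorem scanl_chain (l : List G) (hl : ∀ a ∈ l, a ∈ S ∧ a ≠ 1) : ∀ u : G,
    List.Chain' (fun a b => wordDist S a b = 1) (List.scanl (· * ·) u l) := by
  induction l with
  | nil => intro u; simp [List.scanl, List.Chain']
  | cons a t ih =>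
    intro u
    rw [List.scanl_cons, ← List.singleton_append]
    apply List.IsChain.append
    · simp
    · exact ih (fun b hb => hl b (List.mem_cons_of_mem a hb)) (u * a)
    · rintro x hx y hy
      simp only [List.getLast?_singleton, Option.mem_some_iff] at hx
      subst hx
      rw [scanl_head (u * a) t] at hy
      simp only [Option.mem_some_iff] at hy
      subst hy
      exact wordDist_eq_one (hl a List.mem_cons_self).1 (hl a List.mem_cons_self).2

theorem scanl_isEdgePath (u : G) (l : List G) (hl : ∀ a ∈ l, a ∈ S ∧ a ≠ 1) :
    IsEdgePath S u (u * l.prod) (List.scanl (· * ·) u l) :=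
  ⟨scanl_head u l, scanl_getLast l u, scanl_chain l hl u⟩

theorem edgeWeight_le {x y : G} {m : ℕ} (hm : 1 ≤ m) (hx : m ≤ wordDist S 1 x)
    (hy : m ≤ wordDist S 1 y) : floydEdgeWeight S x y ≤ ((m : ℝ)⁻¹) ^ 2 := by
  unfold floydEdgeWeight
  have h1 : (m : ℝ) ≤ ((max 1 (min (wordDist S 1 x) (wordDist S 1 y)) : ℕ) : ℝ) := by
    have : m ≤ max 1 (min (wordDist S 1 x) (wordDist S 1 y)) := le_max_of_le_right (le_min hx hy)
    exact_mod_cast this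
  have hmpos : (0:ℝ) < (m : ℝ) := by exact_mod_cast hm
  have h2 : ((max 1 (min (wordDist S 1 x) (wordDist S 1 y)) : ℕ) : ℝ)⁻¹ ≤ ((m:ℝ))⁻¹ :=
    inv_anti₀ hmpos h1
  exact pow_le_pow_left₀ (by positivity) h2 2

/-- the key inductive length bound along a word path -/
theorem floydLength_scanl_le (hsym : ∀ s ∈ S, s⁻¹ ∈ S) (hgen : Subgroup.closure S = ⊤) :
    ∀ (l : List G), (∀ a ∈ l, a ∈ S) → ∀ (u : G) (m : ℕ), 1 ≤ m →
      m + l.length ≤ wordDist S 1 u →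
      floydLength S (List.scanl (· * ·) u l) ≤ (l.length : ℝ) * ((m : ℝ)⁻¹) ^ 2 := by
  intro l
  induction l with
  | nil => intro _ u m _ _; simp [List.scanl, floydLength]
  | cons a t ih =>
    intro hmem u m hm hbound
    rw [List.scanl_cons]
    have hpath2 : List.scanl (· * ·) (u * a) t = (u * a) :: (List.scanl (· * ·) (u * a) t).tail := by
      rcases h : List.scanl (· * ·) (u * a) t with _ | ⟨b, t'⟩
      · exact absurd h (scanl_ne_nil _ _)
      · have hb : b = u * a := by
          have := scanl_head (u * a) t; rw [h] at this; simpa using this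
        simp [hb]
    have hlen_eq : floydLength S (u :: List.scanl (· * ·) (u * a) t) =
        floydEdgeWeight S u (u * a) + floydLength S (List.scanl (· * ·) (u * a) t) := by
      rw [hpath2]
      simp only [floydLength]
    rw [hlen_eq]
    -- norm bounds
    have hnu : m + 1 ≤ wordDist S 1 u := by
      have := hbound; simp only [List.length_cons] at this; omega
    have hnua : m + t.length ≤ wordDist S 1 (u * a) := by
      have htri : wordDist S 1 u ≤ wordDist S 1 (u * a) + wordDist S (u * a) u :=
        wordDist_triangle hsym hgen _ _ _
      have hd : wordDist S (u * a) u ≤ 1 := by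
        rw [wordDist_comm hsym]
        exact wordDist_le_one (hmem a List.mem_cons_self)
      simp only [List.length_cons] at hbound
      omega
    have hw : floydEdgeWeight S u (u * a) ≤ ((m : ℝ)⁻¹) ^ 2 :=
      edgeWeight_le hm (by omega) (by omega)
    have hrest := ih (fun b hb => hmem b (List.mem_cons_of_mem a hb)) (u * a) m hm (by omega)
    have : (t.length : ℝ) * ((m : ℝ)⁻¹) ^ 2 + ((m : ℝ)⁻¹) ^ 2 = ((a :: t).length : ℝ) * ((m : ℝ)⁻¹) ^ 2 := by
      simp [List.length_cons]; ring
    linarith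

/-- Lemma B: the block bound -/
theorem floydDist_block_le (hsym : ∀ s ∈ S, s⁻¹ ∈ S) (hgen : Subgroup.closure S = ⊤)
    (u v : G) (m : ℕ) (hm : 1 ≤ m) (hb : m + wordDist S 1 v ≤ wordDist S 1 u) :
    floydDist S u (u * v) ≤ (wordDist S 1 v : ℝ) * ((m : ℝ)⁻¹) ^ 2 := by
  obtain ⟨l, hl, hp, hlen⟩ := exists_word_no_one (S := S) (x := 1) (y := v)
    (wordSet_nonempty hsym hgen 1 v)
  have hp' : l.prod = v := by simpa using hp
  have h1 := floydDist_le_length (S := S)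
    (scanl_isEdgePath u l hl)
  have h2 := floydLength_scanl_le hsym hgen l (fun a ha => (hl a ha).1) u m hm
    (by rw [hlen]; exact hb)
  rw [hp'] at h1
  rw [← hlen]
  linarith

/-- finiteness of balls -/
theorem ball_finite {S : Finset G} (hsym : ∀ s ∈ (S : Set G), s⁻¹ ∈ (S : Set G))
    (hgen : Subgroup.closure (S : Set G) = ⊤) (R : ℕ) :
    {x : G | wordDist (S : Set G) 1 x ≤ R}.Finite := by
  have : {x : G | wordDist (S : Set G) 1 x ≤ R} ⊆
      (fun l : List S => (l.map Subtype.val).prod) '' {l : List S | l.length ≤ R} := by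
    intro x hx
    obtain ⟨l, hl, hp, hlen⟩ := exists_min_word hsym hgen 1 x
    refine ⟨l.pmap (fun a ha => (⟨a, ha⟩ : S)) hl, ?_, ?_⟩
    · simp only [Set.mem_setOf_eq, List.length_pmap]
      rw [hlen]; exact hx
    · show (List.map Subtype.val (List.pmap (fun a ha => (⟨a, ha⟩ : S)) l hl)).prod = x
      rw [List.map_pmap]
      simp only [List.pmap_eq_map, List.map_id']
      simpa using hp
  exact Set.Finite.subset (Set.Finite.image _ (List.finite_length_le S R)) this

theorem wordDist_eq_nm (x y : G) : wordDist S x y = wordDist S 1 (x⁻¹ * y) := by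
  have h := wordDist_mul_left (S := S) x 1 (x⁻¹ * y)
  rw [mul_one, mul_inv_cancel_left] at h
  exact h

end Floyd



/-- key summation bound: `∑ min(r⁻², (K/(n+1))²) ≤ 3K/r` -/
theorem sum_min_bound (K r : ℝ) (hr : 1 ≤ r) (hK : 1 ≤ K) (N : ℕ) :
    ∑ n ∈ Finset.range N, min ((r⁻¹) ^ 2) ((K / ((n : ℝ) + 1)) ^ 2) ≤ 3 * K / r := by
  have hr0 : (0:ℝ) < r := by linarith
  have hK0 : (0:ℝ) < K := by linarith
  set n₀ : ℕ := ⌈K * r⌉₊ with hn₀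
  have hn₀1 : 1 ≤ n₀ := Nat.one_le_ceil_iff.2 (by nlinarith)
  have hn₀le : (n₀ : ℝ) ≤ K * r + 1 := le_of_lt (Nat.ceil_lt_add_one (by positivity))
  have hn₀ge : K * r ≤ (n₀ : ℝ) := Nat.le_ceil _
  have part1 : ∀ M : ℕ, (M:ℝ) ≤ (n₀:ℝ) → ∑ n ∈ Finset.range M, min ((r⁻¹) ^ 2) ((K / ((n : ℝ) + 1)) ^ 2) ≤ 2 * K / r := by
    intro M hM
    calc ∑ n ∈ Finset.range M, min ((r⁻¹) ^ 2) ((K / ((n : ℝ) + 1)) ^ 2)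
        ≤ ∑ _n ∈ Finset.range M, (r⁻¹) ^ 2 := Finset.sum_le_sum (fun i _ => min_le_left _ _)
      _ = (M : ℝ) * (r⁻¹)^2 := by rw [Finset.sum_const]; simp [mul_comm]
      _ ≤ (K * r + 1) * (r⁻¹)^2 := by
          apply mul_le_mul_of_nonneg_right (le_trans hM hn₀le) (by positivity)
      _ ≤ 2 * K / r := by
          rw [div_eq_mul_inv]
          have h1 : (r⁻¹)^2 = r⁻¹ * r⁻¹ := sq r⁻¹
          have h2 : r⁻¹ ≤ 1 := by rw [inv_le_one_iff₀]; right; exact hr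
          have h3 : r * r⁻¹ = 1 := mul_inv_cancel₀ (ne_of_gt hr0)
          calc (K * r + 1) * (r⁻¹)^2 = K * (r * r⁻¹) * r⁻¹ + r⁻¹ * r⁻¹ := by rw [h1]; ring
            _ = K * r⁻¹ + r⁻¹ * r⁻¹ := by rw [h3, mul_one]
            _ ≤ K * r⁻¹ + 1 * (K * r⁻¹) := by
                have : r⁻¹ * r⁻¹ ≤ 1 * (K * r⁻¹) := by
                  rw [one_mul]
                  apply mul_le_mul (le_trans h2 hK) le_rfl (by positivity) (le_of_lt hK0)
                linarith
            _ = 2 * K * r⁻¹ := by ring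
  by_cases hcase : N ≤ n₀
  · have := part1 N (by exact_mod_cast hcase)
    have h23 : 2 * K / r ≤ 3 * K / r := (div_le_div_iff_of_pos_right hr0).2 (by nlinarith)
    linarith
  · push_neg at hcase
    rw [Finset.range_eq_Ico, ← Finset.sum_Ico_consecutive _ (Nat.zero_le n₀) (le_of_lt hcase)]
    have part2 : ∑ n ∈ Finset.Ico n₀ N, min ((r⁻¹) ^ 2) ((K / ((n : ℝ) + 1)) ^ 2) ≤ K / r := by
      have hterm : ∀ n ∈ Finset.Ico n₀ N, min ((r⁻¹) ^ 2) ((K / ((n : ℝ) + 1)) ^ 2) ≤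
          K^2 * ((n:ℝ)⁻¹ - ((n:ℝ)+1)⁻¹) := by
        intro n hn
        rw [Finset.mem_Ico] at hn
        have hn1 : 1 ≤ n := le_trans hn₀1 hn.1
        have hnR : (1:ℝ) ≤ (n:ℝ) := by exact_mod_cast hn1
        have hnpos : (0:ℝ) < (n:ℝ) := by linarith
        have e1 : (n:ℝ)⁻¹ - ((n:ℝ)+1)⁻¹ = ((n:ℝ) * ((n:ℝ)+1))⁻¹ := by
          field_simp; ring
        calc min ((r⁻¹) ^ 2) ((K / ((n : ℝ) + 1)) ^ 2) ≤ (K / ((n : ℝ) + 1)) ^ 2 := min_le_right _ _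
          _ = K^2 * (((n:ℝ)+1) * ((n:ℝ)+1))⁻¹ := by
              rw [div_pow, sq ((n:ℝ)+1), div_eq_mul_inv]
          _ ≤ K^2 * ((n:ℝ) * ((n:ℝ)+1))⁻¹ := by
              apply mul_le_mul_of_nonneg_left _ (by positivity)
              apply inv_anti₀ (by positivity)
              nlinarith
          _ = K^2 * ((n:ℝ)⁻¹ - ((n:ℝ)+1)⁻¹) := by rw [e1]
      calc ∑ n ∈ Finset.Ico n₀ N, min ((r⁻¹) ^ 2) ((K / ((n : ℝ) + 1)) ^ 2)
          ≤ ∑ n ∈ Finset.Ico n₀ N, K^2 * ((n:ℝ)⁻¹ - ((n:ℝ)+1)⁻¹) := Finset.sum_le_sum hterm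
        _ = K^2 * ∑ n ∈ Finset.Ico n₀ N, ((n:ℝ)⁻¹ - ((n:ℝ)+1)⁻¹) := by rw [Finset.mul_sum]
        _ ≤ K / r := by
            have htel : ∑ n ∈ Finset.Ico n₀ N, ((n:ℝ)⁻¹ - ((n:ℝ)+1)⁻¹) = ((n₀:ℝ)⁻¹ - (N:ℝ)⁻¹) := by
              rw [Finset.sum_Ico_eq_sum_range]
              have key : ∀ i ∈ Finset.range (N - n₀),
                  (((n₀ + i : ℕ):ℝ)⁻¹ - (((n₀ + i : ℕ):ℝ)+1)⁻¹) =
                  (fun j => ((n₀ + j : ℕ):ℝ)⁻¹) i - (fun j => ((n₀ + j : ℕ):ℝ)⁻¹) (i+1) := by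
                intro i _
                simp only []
                congr 2
                push_cast; ring
              rw [Finset.sum_congr rfl key, Finset.sum_range_sub']
              have hNn : n₀ + (N - n₀) = N := by omega
              rw [Nat.add_zero, hNn]
            rw [htel]
            have h1 : (n₀:ℝ)⁻¹ - (N:ℝ)⁻¹ ≤ (n₀:ℝ)⁻¹ := by
              have : (0:ℝ) ≤ (N:ℝ)⁻¹ := by positivity
              linarith
            have h2 : (n₀:ℝ)⁻¹ ≤ (K*r)⁻¹ := inv_anti₀ (by positivity) hn₀ge
            have h3 : K^2 * (K*r)⁻¹ = K / r := by field_simp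
            have h4 : (0:ℝ) ≤ K^2 := by positivity
            calc K^2 * ((n₀:ℝ)⁻¹ - (N:ℝ)⁻¹) ≤ K^2 * (K*r)⁻¹ := by
                  apply mul_le_mul_of_nonneg_left (le_trans h1 h2) h4
              _ = K / r := h3
    have p1 := part1 n₀ le_rfl
    rw [Finset.range_eq_Ico] at p1
    have : (3:ℝ) * K / r = 2 * K / r + K / r := by ring
    rw [this]
    exact add_le_add p1 part2

/-- reindexing: sum over `i < D` of `c (dist i i*)` bounded by twice full sum -/
theorem sum_dist_le (c : ℕ → ℝ) (hc : ∀ n, 0 ≤ c n) (D istar : ℕ) (histar : istar ≤ D) :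
    ∑ i ∈ Finset.range D, c (Nat.dist i istar) ≤ 2 * ∑ n ∈ Finset.range (D + 1), c n := by
  classical
  rw [← Finset.sum_filter_add_sum_filter_not (Finset.range D) (fun i => i < istar)]
  have hA : ∑ i ∈ (Finset.range D).filter (fun i => i < istar), c (Nat.dist i istar) ≤
      ∑ n ∈ Finset.range (D + 1), c n := by
    have himg : ∑ i ∈ (Finset.range D).filter (fun i => i < istar), c (Nat.dist i istar) =
        ∑ n ∈ ((Finset.range D).filter (fun i => i < istar)).image (fun i => istar - i), c n := by
      rw [Finset.sum_image ?_]
      · apply Finset.sum_congr rfl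
        intro i hi
        rw [Finset.mem_filter] at hi
        rw [Nat.dist_eq_sub_of_le (le_of_lt hi.2)]
      · intro a ha b hb hab
        rw [Finset.mem_coe, Finset.mem_filter] at ha hb
        simp only at hab
        omega
    rw [himg]
    apply Finset.sum_le_sum_of_subset_of_nonneg
    · intro n hn
      simp only [Finset.mem_image, Finset.mem_filter, Finset.mem_range] at hn ⊢
      omega
    · intro i _ _; exact hc i
  have hB : ∑ i ∈ (Finset.range D).filter (fun i => ¬ i < istar), c (Nat.dist i istar) ≤
      ∑ n ∈ Finset.range (D + 1), c n := by
    have himg : ∑ i ∈ (Finset.range D).filter (fun i => ¬ i < istar), c (Nat.dist i istar) =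
        ∑ n ∈ ((Finset.range D).filter (fun i => ¬ i < istar)).image (fun i => i - istar), c n := by
      rw [Finset.sum_image ?_]
      · apply Finset.sum_congr rfl
        intro i hi
        rw [Finset.mem_filter] at hi
        push_neg at hi
        rw [Nat.dist_eq_sub_of_le_right hi.2]
      · intro a ha b hb hab
        rw [Finset.mem_coe, Finset.mem_filter] at ha hb
        simp only at hab
        omega
    rw [himg]
    apply Finset.sum_le_sum_of_subset_of_nonneg
    · intro n hn
      simp only [Finset.mem_image, Finset.mem_filter, Finset.mem_range] at hn ⊢
      omega
    · intro i _ _; exact hc i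
  linarith





set_option maxHeartbeats 3000000 in
/-- if `G` is finitely generated with nontrivial Floyd boundary
`∂G = 𝔾 \ ι(G)` (where `𝔾` is the Floyd completion, a compact complete metric space in
which `ι(G)` is dense and realizes the Floyd metric, and on which the left-multiplication
action of `G` extends to a convergence action on `∂G`), then every undistorted finitely
generated subgroup `H ≤ G` is dynamically quasiconvex with respect to the action of `G`
on `∂G`. -/
theorem undistorted_implies_dynamically_quasiconvex
    {G : Type*} [Group G] (S : Finset G)
    (hsym : ∀ s ∈ S, s⁻¹ ∈ S) (hgen : Subgroup.closure (S : Set G) = ⊤)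
    {𝔾 : Type*} [MetricSpace 𝔾] [CompleteSpace 𝔾] [CompactSpace 𝔾]
    (ι : G → 𝔾)
    (hdist : ∀ x y : G, dist (ι x) (ι y) = floydDist (S : Set G) x y)
    (hdense : DenseRange ι)
    [MulAction G 𝔾]
    (hcont : ∀ g : G, Continuous fun x : 𝔾 => g • x)
    (hext : ∀ g x : G, ι (g * x) = g • ι x)
    (hnontriv : ∃ a b c : 𝔾, a ∉ Set.range ι ∧ b ∉ Set.range ι ∧ c ∉ Set.range ι ∧
      a ≠ b ∧ a ≠ c ∧ b ≠ c)
    (hconv : ∀ K L : Set (𝔾 × 𝔾 × 𝔾), IsCompact K → IsCompact L →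
      (∀ t ∈ K ∪ L, (t.1 ∉ Set.range ι ∧ t.2.1 ∉ Set.range ι ∧ t.2.2 ∉ Set.range ι) ∧
        (t.1 ≠ t.2.1 ∧ t.1 ≠ t.2.2 ∧ t.2.1 ≠ t.2.2)) →
      {g : G | ((g • K) ∩ L).Nonempty}.Finite)
    (H : Subgroup G) (T : Finset G) (hT : (T : Set G) ⊆ (H : Set G))
    (hTgen : Subgroup.closure (T : Set G) = H)
    (hund : IsUndistorted (S : Set G) (T : Set G) H) :
    ∀ K L : Set 𝔾, IsClosed K → IsClosed L →
      K ⊆ (Set.range ι)ᶜ → L ⊆ (Set.range ι)ᶜ → Disjoint K L →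
      ((fun g : G => (g : G ⧸ H)) ''
        {g : G | ((g • floydLimitSet ι H) ∩ K).Nonempty ∧
                 ((g • floydLimitSet ι H) ∩ L).Nonempty}).Finite := by
  classical
  intro K L hKcl hLcl hKb hLb hdisj
  have hsymS : ∀ s ∈ (S : Set G), s⁻¹ ∈ (S : Set G) := by
    intro s hs; exact_mod_cast hsym s (by exact_mod_cast hs)
  -- separation of K and L
  obtain ⟨δ, hδpos, hδ⟩ : ∃ δ : ℝ, 0 < δ ∧ ∀ x ∈ K, ∀ y ∈ L, δ ≤ dist x y := by
    by_cases hKne : K.Nonempty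
    · by_cases hLne : L.Nonempty
      · have hKcomp : IsCompact K := hKcl.isCompact
        have hLcomp : IsCompact L := hLcl.isCompact
        have hprodC : IsCompact (K ×ˢ L) := hKcomp.prod hLcomp
        have hprodN : (K ×ˢ L).Nonempty := hKne.prod hLne
        obtain ⟨p, hp, hmin⟩ := hprodC.exists_isMinOn hprodN
          (continuous_dist.continuousOn :
            ContinuousOn (fun p : 𝔾 × 𝔾 => dist p.1 p.2) (K ×ˢ L))
        have hp1 : p.1 ∈ K := hp.1
        have hp2 : p.2 ∈ L := hp.2
        have hne : p.1 ≠ p.2 := by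
          intro he
          exact (Set.disjoint_left.1 hdisj hp1) (he ▸ hp2)
        refine ⟨dist p.1 p.2, dist_pos.2 hne, fun x hx y hy => ?_⟩
        exact hmin (Set.mk_mem_prod hx hy)
      · refine ⟨1, one_pos, fun x _ y hy => absurd hy ?_⟩
        simpa [Set.not_nonempty_iff_eq_empty.1 hLne]
    · refine ⟨1, one_pos, fun x hx y _ => absurd hx ?_⟩
      simpa [Set.not_nonempty_iff_eq_empty.1 hKne]
  -- constants
  obtain ⟨ε, hε1, hεb⟩ := hund
  have hε0 : (0:ℝ) < ε := lt_of_lt_of_le one_pos hε1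
  set M' : ℕ := max (Finset.sup T (fun t => wordDist (S : Set G) 1 t)) 1 with hM'def
  have hM'1 : 1 ≤ M' := le_max_right _ _
  have hM'T : ∀ t ∈ T, wordDist (S : Set G) 1 t ≤ M' :=
    fun t ht => le_max_of_le_left (Finset.le_sup ht)
  set e₀ : ℕ := ⌈ε⌉₊ with he₀def
  have he₀ : ε ≤ (e₀ : ℝ) := Nat.le_ceil ε
  obtain ⟨R', hR'M, hR'e, hR'δ, hR'e2⟩ : ∃ R' : ℕ, 2*M'+2 ≤ R' ∧ ε ≤ (R' : ℝ) ∧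
      192*(M' : ℝ)*ε/δ < (R' : ℝ) ∧ 2*e₀+2 ≤ R' := by
    refine ⟨max (max (2*M'+2) (2*e₀+2)) (⌈192*(M' : ℝ)*ε/δ + ε⌉₊ + 1),
      le_max_of_le_left (le_max_left _ _), ?_, ?_, le_max_of_le_left (le_max_right _ _)⟩
    · have h1 : 192*(M' : ℝ)*ε/δ + ε ≤ ((⌈192*(M' : ℝ)*ε/δ + ε⌉₊ : ℕ) : ℝ) := Nat.le_ceil _
      have h2 : ((⌈192*(M' : ℝ)*ε/δ + ε⌉₊ + 1 : ℕ) : ℝ) ≤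
          ((max (max (2*M'+2) (2*e₀+2)) (⌈192*(M' : ℝ)*ε/δ + ε⌉₊ + 1) : ℕ) : ℝ) := by
        exact_mod_cast le_max_right _ _
      have h3 : (0:ℝ) ≤ 192*(M' : ℝ)*ε/δ := by positivity
      push_cast at h1 h2 ⊢
      linarith
    · have h1 : 192*(M' : ℝ)*ε/δ + ε ≤ ((⌈192*(M' : ℝ)*ε/δ + ε⌉₊ : ℕ) : ℝ) := Nat.le_ceil _
      have h2 : ((⌈192*(M' : ℝ)*ε/δ + ε⌉₊ + 1 : ℕ) : ℝ) ≤
          ((max (max (2*M'+2) (2*e₀+2)) (⌈192*(M' : ℝ)*ε/δ + ε⌉₊ + 1) : ℕ) : ℝ) := by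
        exact_mod_cast le_max_right _ _
      push_cast at h1 h2 ⊢
      linarith
  have hR'1 : 1 ≤ R' := by omega
  -- discreteness of the orbit near boundary points
  have hDisc : ∀ z : 𝔾, z ∉ Set.range ι → ∀ R : ℕ, ∃ η > (0:ℝ), ∀ y : G,
      dist (ι y) z < η → R ≤ wordDist (S : Set G) 1 y := by
    intro z hz R
    have hfin : (ι '' {x : G | wordDist (S : Set G) 1 x ≤ R}).Finite :=
      (ball_finite hsymS hgen R).image ι
    have hzout : z ∈ (ι '' {x : G | wordDist (S : Set G) 1 x ≤ R})ᶜ := by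
      intro hzin
      obtain ⟨y, _, hy⟩ := hzin
      exact hz ⟨y, hy⟩
    obtain ⟨η, hη, hballs⟩ := Metric.isOpen_iff.1 hfin.isClosed.isOpen_compl z hzout
    refine ⟨η, hη, fun y hy => ?_⟩
    by_contra hcon
    push_neg at hcon
    have hmem : ι y ∈ ι '' {x : G | wordDist (S : Set G) 1 x ≤ R} :=
      ⟨y, le_of_lt hcon, rfl⟩
    have hball2 : ι y ∈ Metric.ball z η := by
      rw [Metric.mem_ball]
      exact hy
    exact (hballs hball2) hmem
  -- approximation of limit points by orbit points
  have happrox : ∀ g : G, ∀ x : 𝔾, x ∈ g • floydLimitSet ι H → x ∉ Set.range ι →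
      ∀ η : ℝ, 0 < η → ∃ h ∈ H, dist (ι (g * h)) x < η := by
    intro g x hx hxout η hη
    obtain ⟨w, hw, rfl⟩ := Set.mem_smul_set.1 hx
    obtain ⟨g₀, hwcl⟩ := hw
    set c : ℕ := wordDist (S : Set G) 1 g₀⁻¹ with hcdef
    obtain ⟨m, hm1, hmc⟩ : ∃ m : ℕ, 1 ≤ m ∧ (c : ℝ) * ((m : ℝ)⁻¹)^2 < η/2 := by
      obtain ⟨m, hm⟩ := exists_nat_gt (max 1 (2*(c : ℝ)/η))
      have hm1' : (1:ℝ) < (m:ℝ) := lt_of_le_of_lt (le_max_left _ _) hm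
      have hm2 : 2*(c : ℝ)/η < (m:ℝ) := lt_of_le_of_lt (le_max_right _ _) hm
      have hmpos : (0:ℝ) < (m:ℝ) := by linarith
      refine ⟨m, by exact_mod_cast le_of_lt hm1', ?_⟩
      have hc0 : (0:ℝ) ≤ (c:ℝ) := Nat.cast_nonneg c
      have hminv : (m : ℝ)⁻¹ ≤ 1 := by
        rw [inv_le_one_iff₀]; right; exact le_of_lt hm1'
      have hminvpos : (0:ℝ) < (m : ℝ)⁻¹ := inv_pos.2 hmpos
      have h1 : ((m : ℝ)⁻¹)^2 ≤ (m : ℝ)⁻¹ := by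
        rw [sq]
        nlinarith
      have h2 : (c : ℝ) * (m : ℝ)⁻¹ < η/2 := by
        rw [div_lt_iff₀ hη] at hm2
        have hmul := mul_lt_mul_of_pos_right hm2 hminvpos
        have h3 : (m:ℝ)*η*(m:ℝ)⁻¹ = η := by field_simp
        rw [h3] at hmul
        nlinarith
      nlinarith [mul_le_mul_of_nonneg_left h1 hc0]
    obtain ⟨η₂, hη₂, hballd⟩ := hDisc (g • w) hxout (m + c)
    have hsubim : (fun p : 𝔾 => g • p) '' (((fun h : G => ι (h * g₀)) '' (H : Set G)) \ {w}) ⊆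
        (fun h : G => ι (g * (h * g₀))) '' (H : Set G) := by
      rintro p ⟨q, ⟨⟨h, hh, rfl⟩, _⟩, rfl⟩
      exact ⟨h, hh, hext g (h * g₀)⟩
    have hxcl : g • w ∈ closure ((fun h : G => ι (g * (h * g₀))) '' (H : Set G)) := by
      have h1 : g • w ∈ (fun p : 𝔾 => g • p) ''
          closure (((fun h : G => ι (h * g₀)) '' (H : Set G)) \ {w}) := ⟨w, hwcl, rfl⟩
      exact closure_mono hsubim (image_closure_subset_closure_image (hcont g) h1)
    obtain ⟨p, hpmem, hdistp⟩ := Metric.mem_closure_iff.1 hxcl (min (η/2) η₂)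
      (lt_min (by positivity) hη₂)
    obtain ⟨h, hh, rfl⟩ := hpmem
    have hnm : m + c ≤ wordDist (S : Set G) 1 (g * (h * g₀)) := by
      apply hballd
      rw [dist_comm]
      exact lt_of_lt_of_le hdistp (min_le_right _ _)
    have hcorr : dist (ι (g * (h * g₀))) (ι (g * h)) ≤ (c : ℝ) * ((m : ℝ)⁻¹)^2 := by
      rw [hdist]
      have hb := floydDist_block_le hsymS hgen (g * (h * g₀)) g₀⁻¹ m hm1 (by
        rw [← hcdef]
        omega)
      have huv : g * (h * g₀) * g₀⁻¹ = g * h := by group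
      rw [huv] at hb
      rw [← hcdef] at hb
      exact hb
    refine ⟨h, hh, ?_⟩
    calc dist (ι (g * h)) (g • w)
        ≤ dist (ι (g * h)) (ι (g * (h * g₀))) + dist (ι (g * (h * g₀))) (g • w) :=
          dist_triangle _ _ _
      _ < (c : ℝ) * ((m : ℝ)⁻¹)^2 + η/2 := by
          have := dist_comm (g • w) (ι (g * (h * g₀)))
          have h2 : dist (ι (g * (h * g₀))) (g • w) < η/2 := by
            rw [dist_comm]
            exact lt_of_lt_of_le hdistp (min_le_left _ _)
          rw [dist_comm (ι (g * h))]
          linarith [hcorr]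
      _ < η := by linarith
  -- the key geometric claim
  have hkey : ∀ g : G, ((g • floydLimitSet ι H) ∩ K).Nonempty →
      ((g • floydLimitSet ι H) ∩ L).Nonempty →
      ∃ k ∈ H, wordDist (S : Set G) 1 (g * k) ≤ R' := by
    intro g hgK hgL
    obtain ⟨x, hxΛ, hxK⟩ := hgK
    obtain ⟨y, hyΛ, hyL⟩ := hgL
    have hδxy : δ ≤ dist x y := hδ x hxK y hyL
    obtain ⟨h, hh, hhx⟩ := happrox g x hxΛ (hKb hxK) (δ/4) (by positivity)
    obtain ⟨h', hh', hhy⟩ := happrox g y hyΛ (hLb hyL) (δ/4) (by positivity)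
    have hfar : δ/2 ≤ dist (ι (g * h)) (ι (g * h')) := by
      have ht4 := dist_triangle4 x (ι (g * h)) (ι (g * h')) y
      have hc1 : dist x (ι (g * h)) < δ/4 := by rw [dist_comm]; exact hhx
      have hc2 : dist (ι (g * h')) y < δ/4 := hhy
      linarith
    set D : ℕ := wordDist (T : Set G) h h' with hDdef
    by_cases hD0 : D = 0
    · -- short case
      by_cases hsmall : wordDist (S : Set G) 1 (g * h) ≤ R'
      · exact ⟨h, hh, hsmall⟩
      push_neg at hsmall
      exfalso
      have hud := (hεb h hh h' hh').2
      rw [← hDdef, hD0] at hud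
      push_cast at hud
      -- wordDist S h h' ≤ ε, hence ≤ e₀
      have hv : wordDist (S : Set G) 1 (h⁻¹ * h') = wordDist (S : Set G) h h' :=
        (wordDist_eq_nm h h').symm
      have hve : (wordDist (S : Set G) 1 (h⁻¹ * h') : ℝ) ≤ ε := by rw [hv]; linarith
      have hvn : wordDist (S : Set G) 1 (h⁻¹ * h') ≤ e₀ := by
        have : (wordDist (S : Set G) 1 (h⁻¹ * h') : ℝ) ≤ (e₀ : ℝ) := le_trans hve he₀
        exact_mod_cast this
      have hblock := floydDist_block_le hsymS hgen (g * h) (h⁻¹ * h') (R' - e₀)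
        (by omega) (by omega)
      have huv : g * h * (h⁻¹ * h') = g * h' := by group
      rw [huv] at hblock
      have hdd : dist (ι (g * h)) (ι (g * h')) ≤
          (wordDist (S : Set G) 1 (h⁻¹ * h') : ℝ) * (((R' - e₀ : ℕ) : ℝ)⁻¹)^2 := by
        rw [hdist]; exact hblock
      -- numeric contradiction
      have hnum : (wordDist (S : Set G) 1 (h⁻¹ * h') : ℝ) * (((R' - e₀ : ℕ) : ℝ)⁻¹)^2 < δ/2 := by
        have heR : e₀ ≤ R' := by omega
        have hc1 : ((R' - e₀ : ℕ) : ℝ) = (R' : ℝ) - (e₀ : ℝ) := Nat.cast_sub heR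
        have hR2 : (2*(e₀:ℝ)+2) ≤ (R' : ℝ) := by exact_mod_cast hR'e2
        have hR'pos : (0:ℝ) < (R' : ℝ) := by exact_mod_cast hR'1
        have hA2 : (R' : ℝ)/2 ≤ ((R' - e₀ : ℕ) : ℝ) := by
          rw [hc1]
          have he0nn : (0:ℝ) ≤ (e₀ : ℝ) := Nat.cast_nonneg _
          linarith
        have hApos : (0:ℝ) < ((R' - e₀ : ℕ) : ℝ) := by linarith
        have hi1 : (((R' - e₀ : ℕ) : ℝ))⁻¹ ≤ 2/(R' : ℝ) := by
          rw [show 2/(R':ℝ) = ((R':ℝ)/2)⁻¹ by rw [inv_div]]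
          exact inv_anti₀ (by positivity) hA2
        have hi2 : ((((R' - e₀ : ℕ) : ℝ))⁻¹)^2 ≤ (2/(R' : ℝ))^2 :=
          pow_le_pow_left₀ (by positivity) hi1 2
        have hstep : (wordDist (S : Set G) 1 (h⁻¹ * h') : ℝ) * (((R' - e₀ : ℕ) : ℝ)⁻¹)^2 ≤
            ε * (2/(R' : ℝ))^2 :=
          mul_le_mul hve hi2 (by positivity) (le_of_lt hε0)
        have hfin2 : ε * (2/(R' : ℝ))^2 < δ/2 := by
          rw [div_lt_iff₀ hδpos] at hR'δ
          have hM'r : (1:ℝ) ≤ (M':ℝ) := by exact_mod_cast hM'1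
          have hRq : (0:ℝ) < (R':ℝ)^2 := by positivity
          rw [show ε * (2/(R':ℝ))^2 = 4*ε/(R':ℝ)^2 by rw [div_pow]; ring]
          rw [div_lt_iff₀ hRq]
          have hRsq : (R':ℝ) ≤ (R':ℝ)^2 := by nlinarith
          nlinarith
        linarith
      linarith
    · -- main case
      have hTne : {n : ℕ | ∃ l : List G, (∀ a ∈ l, a ∈ (T : Set G)) ∧ l.prod = h⁻¹ * h' ∧
          l.length = n}.Nonempty := by
        rw [Set.nonempty_iff_ne_empty]
        intro hemp
        exact hD0 (by rw [hDdef, wordDist, hemp, Nat.sInf_empty])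
      obtain ⟨τ, hτ, hτp, hτlen⟩ := exists_word_no_one (S := (T : Set G)) (x := h) (y := h') hTne
      rw [← hDdef] at hτlen
      set k : ℕ → G := fun i => h * (τ.take i).prod with hkdef
      have hkH : ∀ i, k i ∈ H := by
        intro i
        apply H.mul_mem hh
        apply Subgroup.list_prod_mem
        intro a ha
        exact hT (hτ a (List.mem_of_mem_take ha)).1
      have hk0 : k 0 = h := by simp [hkdef]
      have hkD : k D = h' := by
        rw [hkdef]
        simp only
        rw [← hτlen, List.take_length, hτp, mul_inv_cancel_left]
      by_cases hq : ∃ i, i ≤ D ∧ wordDist (S : Set G) 1 (g * k i) ≤ R'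
      · obtain ⟨i, _, hle⟩ := hq
        exact ⟨k i, hkH i, hle⟩
      push_neg at hq
      exfalso
      obtain ⟨istar, histar, hminq⟩ := Finset.exists_min_image (Finset.range (D+1))
        (fun i => wordDist (S : Set G) 1 (g * k i)) ⟨0, by simp⟩
      rw [Finset.mem_range] at histar
      set m : ℕ := wordDist (S : Set G) 1 (g * k istar) with hmdef
      have hmR : R' < m := hq istar (by omega)
      -- T-geodesic lower bound
      have hTword : ∀ i j : ℕ, i ≤ j → j ≤ D →
          (j - i : ℕ) ≤ wordDist (T : Set G) (k i) (k j) := by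
        intro i j hij hjD
        have hpx : (τ.take i).prod * ((τ.drop i).take (j-i)).prod = (τ.take j).prod := by
          rw [← List.prod_append]
          congr 1
          rw [← List.take_add]
          congr 1
          omega
        have hsubprod : ((τ.drop i).take (j-i)).prod = (k i)⁻¹ * k j := by
          have h2 : ((τ.drop i).take (j-i)).prod = (τ.take i).prod⁻¹ * (τ.take j).prod := by
            rw [← hpx]; group
          rw [h2, hkdef]
          simp only
          group
        have hsubmem : ∀ a ∈ (τ.drop i).take (j-i), a ∈ (T : Set G) :=
          fun a ha => (hτ a (List.mem_of_mem_drop (List.mem_of_mem_take ha))).1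
        have hne3 : {n : ℕ | ∃ l : List G, (∀ a ∈ l, a ∈ (T : Set G)) ∧
            l.prod = (k i)⁻¹ * (k j) ∧ l.length = n}.Nonempty :=
          ⟨_, _, hsubmem, hsubprod, rfl⟩
        obtain ⟨w, hw, hwp, hwlen⟩ := Nat.sInf_mem hne3
        have hdropprod : (τ.drop j).prod = (τ.take j).prod⁻¹ * (h⁻¹ * h') := by
          have h3 : (τ.take j).prod * (τ.drop j).prod = τ.prod := by
            rw [← List.prod_append, List.take_append_drop]
          rw [← hτp, ← h3]; group
        have hsplice := wordDist_le_word (S := (T : Set G)) h h'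
          (l := τ.take i ++ (w ++ τ.drop j))
          (by
            intro a ha
            rcases List.mem_append.1 ha with h1 | h1
            · exact (hτ a (List.mem_of_mem_take h1)).1
            rcases List.mem_append.1 h1 with h2 | h2
            · exact hw a h2
            · exact (hτ a (List.mem_of_mem_drop h2)).1)
          (by
            rw [List.prod_append, List.prod_append, hwp, hdropprod, hkdef]
            simp only
            group)
        rw [← hDdef] at hsplice
        have hlen2 : (τ.take i ++ (w ++ τ.drop j)).length = i + (w.length + (D - j)) := by
          rw [List.length_append, List.length_append, List.length_take, List.length_drop, hτlen]
          congr 1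
          omega
        rw [hlen2] at hsplice
        have hwd : w.length = wordDist (T : Set G) (k i) (k j) := hwlen
        omega
      -- S-distance lower bound along the path
      have hnormlow : ∀ i : ℕ, i ≤ D →
          ε⁻¹ * (Nat.dist i istar : ℝ) - ε - (m : ℝ) ≤ (wordDist (S : Set G) 1 (g * k i) : ℝ) := by
        intro i hiD
        have hinvnn : (0:ℝ) ≤ ε⁻¹ := inv_nonneg.2 (le_of_lt hε0)
        rcases le_total i istar with hcase | hcase
        · have h1 := (hεb (k i) (hkH i) (k istar) (hkH istar)).1
          have h2 : ((istar - i : ℕ) : ℝ) ≤ (wordDist (T : Set G) (k i) (k istar) : ℝ) := by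
            exact_mod_cast hTword i istar hcase (by omega)
          have h4 : wordDist (S : Set G) (k i) (k istar) =
              wordDist (S : Set G) (g * k i) (g * k istar) := (wordDist_mul_left g _ _).symm
          have h5 := nm_le_add hsymS hgen (g * k i) (g * k istar)
          have h7 : (wordDist (S : Set G) (k i) (k istar) : ℝ) ≤
              (wordDist (S : Set G) 1 (g * k i) : ℝ) + (m : ℝ) := by
            rw [h4, hmdef]
            exact_mod_cast h5
          have hdd : (Nat.dist i istar : ℝ) = ((istar - i : ℕ) : ℝ) := by
            rw [Nat.dist_eq_sub_of_le hcase]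
          have h6 : ε⁻¹ * (Nat.dist i istar : ℝ) ≤
              ε⁻¹ * (wordDist (T : Set G) (k i) (k istar) : ℝ) := by
            apply mul_le_mul_of_nonneg_left _ hinvnn
            rw [hdd]; exact h2
          linarith
        · have h1 := (hεb (k istar) (hkH istar) (k i) (hkH i)).1
          have h2 : ((i - istar : ℕ) : ℝ) ≤ (wordDist (T : Set G) (k istar) (k i) : ℝ) := by
            exact_mod_cast hTword istar i hcase hiD
          have h4 : wordDist (S : Set G) (k istar) (k i) =
              wordDist (S : Set G) (g * k istar) (g * k i) := (wordDist_mul_left g _ _).symm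
          have h5 := nm_le_add hsymS hgen (g * k istar) (g * k i)
          have h7 : (wordDist (S : Set G) (k istar) (k i) : ℝ) ≤
              (m : ℝ) + (wordDist (S : Set G) 1 (g * k i) : ℝ) := by
            rw [h4, hmdef]
            exact_mod_cast h5
          have hdd : (Nat.dist i istar : ℝ) = ((i - istar : ℕ) : ℝ) := by
            rw [Nat.dist_eq_sub_of_le_right hcase]
          have h6 : ε⁻¹ * (Nat.dist i istar : ℝ) ≤
              ε⁻¹ * (wordDist (T : Set G) (k istar) (k i) : ℝ) := by
            apply mul_le_mul_of_nonneg_left _ hinvnn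
            rw [hdd]; exact h2
          linarith
      -- per-edge bound
      have hblocks : ∀ i ∈ Finset.range D, dist (ι (g * k i)) (ι (g * k (i+1))) ≤
          (M' : ℝ) * min (((((m : ℝ) - (M' : ℝ))⁻¹))^2)
            ((8*ε / ((Nat.dist i istar : ℝ)+1))^2) := by
        intro i hir
        rw [Finset.mem_range] at hir
        have hilt : i < τ.length := by omega
        have hstep : k (i+1) = k i * τ[i]'hilt := by
          rw [hkdef]
          simp only
          rw [List.prod_take_succ τ i hilt, ← mul_assoc]
        have htimem := hτ _ (List.getElem_mem hilt)
        have htiM : wordDist (S : Set G) 1 (τ[i]'hilt) ≤ M' := hM'T _ (by exact_mod_cast htimem.1)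
        have hqR : R' < wordDist (S : Set G) 1 (g * k i) := hq i (by omega)
        have hqm : m ≤ wordDist (S : Set G) 1 (g * k i) := hminq i (Finset.mem_range.2 (by omega))
        have hb := floydDist_block_le hsymS hgen (g * k i) (τ[i]'hilt)
          (wordDist (S : Set G) 1 (g * k i) - M') (by omega) (by omega)
        have hmul : g * k i * (τ[i]'hilt) = g * k (i+1) := by rw [hstep, mul_assoc]
        rw [hmul] at hb
        rw [hdist]
        refine le_trans hb ?_
        have hwM : (wordDist (S : Set G) 1 (τ[i]'hilt) : ℝ) ≤ (M' : ℝ) := by exact_mod_cast htiM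
        have hMq : M' ≤ wordDist (S : Set G) 1 (g * k i) := by omega
        have hm2M : (2*M'+3 : ℕ) ≤ m := by omega
        have hm2MR : 2*(M' : ℝ) + 3 ≤ (m : ℝ) := by exact_mod_cast hm2M
        have hM'nn : (0:ℝ) ≤ (M' : ℝ) := Nat.cast_nonneg _
        have hcast : ((wordDist (S : Set G) 1 (g * k i) - M' : ℕ) : ℝ) =
            (wordDist (S : Set G) 1 (g * k i) : ℝ) - (M' : ℝ) := Nat.cast_sub hMq
        have hqmR : (m : ℝ) ≤ (wordDist (S : Set G) 1 (g * k i) : ℝ) := by exact_mod_cast hqm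
        have hAr : (m : ℝ) - (M' : ℝ) ≤ ((wordDist (S : Set G) 1 (g * k i) - M' : ℕ) : ℝ) := by
          rw [hcast]; linarith
        have hrpos : (0:ℝ) < (m : ℝ) - (M' : ℝ) := by linarith
        have hApos : (0:ℝ) < ((wordDist (S : Set G) 1 (g * k i) - M' : ℕ) : ℝ) :=
          lt_of_lt_of_le hrpos hAr
        have hpoint : (((wordDist (S : Set G) 1 (g * k i) - M' : ℕ) : ℝ)⁻¹)^2 ≤
            min (((((m : ℝ) - (M' : ℝ))⁻¹))^2) ((8*ε / ((Nat.dist i istar : ℝ)+1))^2) := by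
          apply le_min
          · exact pow_le_pow_left₀ (by positivity) (inv_anti₀ hrpos hAr) 2
          · have hdd0 : (0:ℝ) ≤ (Nat.dist i istar : ℝ) := Nat.cast_nonneg _
            have hKK : (((Nat.dist i istar : ℝ)+1)/(8*ε)) ≤
                ((wordDist (S : Set G) 1 (g * k i) - M' : ℕ) : ℝ) := by
              by_cases hsml : (Nat.dist i istar : ℝ) + 1 ≤ 8*ε*((m:ℝ)-(M':ℝ))
              · have hstep2 : ((Nat.dist i istar : ℝ)+1)/(8*ε) ≤ (m:ℝ)-(M':ℝ) := by
                  rw [div_le_iff₀ (by positivity)]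
                  linarith [hsml]
                linarith
              · push_neg at hsml
                have hnl := hnormlow i (by omega)
                have hge : ε⁻¹*(Nat.dist i istar : ℝ) - ε - (m:ℝ) - (M':ℝ) ≤
                    ((wordDist (S : Set G) 1 (g * k i) - M' : ℕ) : ℝ) := by
                  rw [hcast]; linarith
                have hme : ε ≤ (m:ℝ) := by
                  have : (R' : ℝ) ≤ (m : ℝ) := by exact_mod_cast le_of_lt hmR
                  linarith [hR'e]
                have hinv : ε * ε⁻¹ = 1 := mul_inv_cancel₀ (ne_of_gt hε0)
                have h1m : (1:ℝ) ≤ (m:ℝ) := by linarith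
                have hkey2 : ((Nat.dist i istar : ℝ)+1)/(8*ε) ≤
                    ε⁻¹*(Nat.dist i istar : ℝ) - ε - (m:ℝ) - (M':ℝ) := by
                  rw [div_le_iff₀ (by positivity)]
                  have hexp : (ε⁻¹*(Nat.dist i istar : ℝ) - ε - (m:ℝ) - (M':ℝ))*(8*ε) =
                      8*(Nat.dist i istar : ℝ)*(ε*ε⁻¹) - 8*ε^2 - 8*(m:ℝ)*ε - 8*(M':ℝ)*ε := by
                    ring
                  rw [hexp, hinv]
                  nlinarith [mul_le_mul_of_nonneg_left hme (le_of_lt hε0),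
                    mul_nonneg (sub_nonneg.2 hε1) (sub_nonneg.2 h1m),
                    mul_le_mul_of_nonneg_left hm2MR (le_of_lt hε0)]
                linarith
            have hpos2 : (0:ℝ) < ((Nat.dist i istar : ℝ)+1)/(8*ε) := by positivity
            have hi3 := inv_anti₀ hpos2 hKK
            rw [inv_div] at hi3
            exact pow_le_pow_left₀ (by positivity) hi3 2
        exact mul_le_mul hwM hpoint (by positivity) hM'nn
      -- assemble
      have hsum := dist_le_range_sum_dist (fun i => ι (g * k i)) D
      rw [hk0, hkD] at hsum
      have hchain := le_trans hsum (Finset.sum_le_sum hblocks)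
      rw [← Finset.mul_sum] at hchain
      have hre := sum_dist_le (fun n => min (((((m : ℝ) - (M' : ℝ))⁻¹))^2)
        ((8*ε / ((n : ℝ)+1))^2)) (fun n => le_min_iff.2 ⟨by positivity, by positivity⟩)
        D istar (by omega)
      have hsb := sum_min_bound (8*ε) ((m : ℝ) - (M' : ℝ)) (by
        have hm2M : (2*M'+3 : ℕ) ≤ m := by omega
        have hm2MR : 2*(M' : ℝ) + 3 ≤ (m : ℝ) := by exact_mod_cast hm2M
        have hM'nn : (0:ℝ) ≤ (M' : ℝ) := Nat.cast_nonneg _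
        linarith) (by linarith) (D+1)
      -- final numeric contradiction
      have hfinal : (M' : ℝ) * (2 * (3 * (8*ε) / ((m : ℝ) - (M' : ℝ)))) < δ/2 := by
        have hm2M : (2*M'+3 : ℕ) ≤ m := by omega
        have hm2MR : 2*(M' : ℝ) + 3 ≤ (m : ℝ) := by exact_mod_cast hm2M
        have hM'nn : (0:ℝ) ≤ (M' : ℝ) := Nat.cast_nonneg _
        have hrm : (m:ℝ)/2 ≤ (m:ℝ) - (M':ℝ) := by linarith
        have hmR' : (R':ℝ) < (m:ℝ) := by exact_mod_cast hmR
        have hpos : (0:ℝ) < (m:ℝ) - (M':ℝ) := by linarith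
        rw [div_lt_iff₀ hδpos] at hR'δ
        rw [show (M' : ℝ) * (2 * (3 * (8*ε) / ((m : ℝ) - (M' : ℝ)))) =
          48*(M':ℝ)*ε/((m:ℝ)-(M':ℝ)) by rw [mul_div_assoc]; ring]
        rw [div_lt_iff₀ hpos]
        nlinarith [mul_lt_mul_of_pos_left hmR' hδpos]
      have hle2 : dist (ι (g * h)) (ι (g * h')) < δ/2 := by
        calc dist (ι (g * h)) (ι (g * h')) ≤ (M' : ℝ) * ∑ i ∈ Finset.range D,
              min (((((m : ℝ) - (M' : ℝ))⁻¹))^2) ((8*ε / ((Nat.dist i istar : ℝ)+1))^2) := hchain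
          _ ≤ (M' : ℝ) * (2 * ∑ n ∈ Finset.range (D+1),
              min (((((m : ℝ) - (M' : ℝ))⁻¹))^2) ((8*ε / ((n : ℝ)+1))^2)) := by
              apply mul_le_mul_of_nonneg_left _ (Nat.cast_nonneg M')
              exact hre
          _ ≤ (M' : ℝ) * (2 * (3 * (8*ε) / ((m : ℝ) - (M' : ℝ)))) := by
              apply mul_le_mul_of_nonneg_left _ (Nat.cast_nonneg M')
              linarith
          _ < δ/2 := hfinal
      linarith
  -- conclusion
  have hball := ball_finite hsymS hgen R'
  apply Set.Finite.subset (hball.image (fun b : G => (b : G ⧸ H)))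
  rintro q ⟨g, ⟨hgK, hgL⟩, rfl⟩
  obtain ⟨k, hkmem, hkle⟩ := hkey g hgK hgL
  exact ⟨g * k, hkle, QuotientGroup.mk_mul_of_mem g hkmem⟩
end

section
/- Let G be a group with a convergence group action on a compact metrizable space M with at least three points, and let H be a dynamically quasiconvex subgroup of G with |Λ(H)| ≥ 2. Then for any subgroup J with H ⊆ J ⊆ G satisfying Λ(H) = Λ(J), the subgroup H has finite index in J; in particular, J is dynamically quasiconvex. -/
open Pointwise Filter Topology Set

lemma smul_mem_limitSet {G M : Type*} [Group G] [TopologicalSpace M] [MulAction G M]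
    (hc : ∀ g : G, Continuous fun x : M => g • x)
    (J : Subgroup G) {j : G} (hj : j ∈ J) {x : M} (hx : x ∈ limitSet G M J) :
    j • x ∈ limitSet G M J := by
  obtain ⟨m, hm⟩ := hx
  refine ⟨m, ?_⟩
  set S : Set M := (fun h : G => h • m) '' (J : Set G) with hS
  have h1 : j • x ∈ (fun y : M => j • y) '' closure (S \ {x}) := ⟨x, hm, rfl⟩
  have h2 := image_closure_subset_closure_image (s := S \ {x}) (hc j)
  have h3 : (fun y : M => j • y) '' (S \ {x}) ⊆ S \ {j • x} := by
    rintro _ ⟨y, ⟨hyS, hy⟩, rfl⟩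
    obtain ⟨h, hh, rfl⟩ := hyS
    refine ⟨⟨j * h, mul_mem hj hh, mul_smul j h m⟩, ?_⟩
    simp only [mem_singleton_iff]
    intro he
    exact hy (mem_singleton_iff.mpr (MulAction.injective j he))
  exact closure_mono h3 (h2 h1)

/-- if `H` is dynamically quasiconvex with `|Λ(H)| ≥ 2`, then any
intermediate subgroup `H ≤ J ≤ G` with the same limit set contains `H` with finite
index, and is itself dynamically quasiconvex. -/
theorem finite_index_in_subgroup_with_same_limit_set
    {G M : Type*} [Group G] [TopologicalSpace M] [CompactSpace M]
    [TopologicalSpace.MetrizableSpace M] [MulAction G M]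
    (hconv : IsConvergenceAction G M)
    (h3 : ∃ a b c : M, a ≠ b ∧ a ≠ c ∧ b ≠ c)
    (H : Subgroup G) (hdqc : DynamicallyQuasiconvex G M H)
    (hΛ : 2 ≤ (limitSet G M H).encard) :
    ∀ J : Subgroup G, H ≤ J → limitSet G M H = limitSet G M J →
      H.relIndex J ≠ 0 ∧ DynamicallyQuasiconvex G M J := by
  intro J hHJ hEq
  obtain ⟨a, b, ha, hb, hab⟩ :=
    Set.one_lt_encard_iff.mp (lt_of_lt_of_le (by norm_num) hΛ)
  -- every element of J sends Λ(H) to a set containing a and b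
  have hmem : ∀ j ∈ J, j ∈ {g : G | ((g • limitSet G M H) ∩ ({a} : Set M)).Nonempty ∧
      ((g • limitSet G M H) ∩ ({b} : Set M)).Nonempty} := by
    intro j hj
    have hainv : a ∈ j • limitSet G M H := by
      rw [mem_smul_set_iff_inv_smul_mem, hEq]
      exact smul_mem_limitSet hconv.1 J (inv_mem hj) (hEq ▸ ha)
    have hbinv : b ∈ j • limitSet G M H := by
      rw [mem_smul_set_iff_inv_smul_mem, hEq]
      exact smul_mem_limitSet hconv.1 J (inv_mem hj) (hEq ▸ hb)
    exact ⟨⟨a, hainv, rfl⟩, ⟨b, hbinv, rfl⟩⟩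
  have hfin := hdqc {a} {b} isClosed_singleton isClosed_singleton
    (disjoint_singleton.mpr hab)
  have hTfin : ((fun g : G => (g : G ⧸ H)) '' (J : Set G)).Finite :=
    hfin.subset (Set.image_mono hmem)
  -- the quotient J ⧸ H.subgroupOf J is finite
  haveI hfq : Finite (J ⧸ H.subgroupOf J) := by
    haveI := hTfin.to_subtype
    let f : J ⧸ H.subgroupOf J → ((fun g : G => (g : G ⧸ H)) '' (J : Set G)) := fun x =>
      ⟨Quotient.liftOn' x (fun j : J => ((j : G) : G ⧸ H)) (by
        intro j₁ j₂ hr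
        rw [QuotientGroup.leftRel_apply, Subgroup.mem_subgroupOf] at hr
        refine QuotientGroup.eq.mpr ?_
        simpa using hr),
      by
        refine Quotient.inductionOn' x ?_
        intro j
        exact ⟨(j : G), j.2, rfl⟩⟩
    have hfinj : Function.Injective f := by
      intro x y hxy
      have hxy' := congrArg Subtype.val hxy
      revert hxy'
      refine Quotient.inductionOn₂' x y ?_
      intro j₁ j₂ h
      apply Quotient.sound'
      rw [QuotientGroup.leftRel_apply, Subgroup.mem_subgroupOf]
      simpa using QuotientGroup.eq.mp h
    exact Finite.of_injective f hfinj
  refine ⟨Subgroup.index_ne_zero_of_finite, ?_⟩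
  -- J is dynamically quasiconvex
  intro K L hK hL hKL
  have hEq' : limitSet G M J = limitSet G M H := hEq.symm
  rw [hEq']
  have hfin2 := hdqc K L hK hL hKL
  set S : Set G := {g : G | ((g • limitSet G M H) ∩ K).Nonempty ∧
      ((g • limitSet G M H) ∩ L).Nonempty} with hSdef
  let p : G ⧸ H → G ⧸ J := fun x =>
    Quotient.liftOn' x (fun g : G => (g : G ⧸ J)) (by
      intro g₁ g₂ hr
      rw [QuotientGroup.leftRel_apply] at hr
      exact QuotientGroup.eq.mpr (hHJ hr))
  have himg : (fun g : G => (g : G ⧸ J)) '' S = p '' ((fun g : G => (g : G ⧸ H)) '' S) := by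
    rw [Set.image_image]
    exact Set.image_congr fun g _ => rfl
  rw [himg]
  exact hfin2.image p
end

section
/- Let G be a group with a convergence group action on a compact metrizable space M with at least three points, and let H and J be dynamically quasiconvex subgroups of G with Λ(H) = Λ(J). If |Λ(H)| ≥ 2, then H and J are commensurable, i.e. H ∩ J has finite index in both H and J. -/
open Pointwise Filter Topology Set

lemma smul_mem_limitSet_aux {G M : Type*} [Group G] [TopologicalSpace M] [MulAction G M]
    (hcont : ∀ g : G, Continuous fun x : M => g • x)
    {H : Subgroup G} {h : G} (hh : h ∈ H) {x : M} (hx : x ∈ limitSet G M H) :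
    h • x ∈ limitSet G M H := by
  obtain ⟨m, hm⟩ := hx
  refine ⟨m, ?_⟩
  have h1 : h • x ∈ (fun y : M => h • y) '' closure (((fun g : G => g • m) '' (H : Set G)) \ {x}) :=
    ⟨x, hm, rfl⟩
  have h2 := (image_closure_subset_closure_image (hcont h)) h1
  refine closure_mono ?_ h2
  rw [Set.image_diff (MulAction.injective h), Set.image_singleton]
  apply Set.diff_subset_diff_left
  rintro _ ⟨_, ⟨g, hg, rfl⟩, rfl⟩
  exact ⟨h * g, H.mul_mem hh hg, by simp [mul_smul]⟩

lemma relindex_ne_zero_of_image_finite {G : Type*} [Group G] {H J : Subgroup G}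
    (hfin : ((fun g : G => (g : G ⧸ J)) '' (H : Set G)).Finite) :
    J.relIndex H ≠ 0 := by
  have hmem : ∀ h : H, ((h : G) : G ⧸ J) ∈ ((fun g : G => (g : G ⧸ J)) '' (H : Set G)) :=
    fun h => ⟨h, h.2, rfl⟩
  haveI := hfin.to_subtype
  have : Finite (H ⧸ J.subgroupOf H) := by
    refine Finite.of_injective
      (Quotient.lift (fun h : H => (⟨((h : G) : G ⧸ J), hmem h⟩ :
        ((fun g : G => (g : G ⧸ J)) '' (H : Set G)))) ?_) ?_
    · intro p q hpq
      have hpq' : (p : G)⁻¹ * (q : G) ∈ J := by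
        have := QuotientGroup.leftRel_apply.mp hpq
        simpa [Subgroup.mem_subgroupOf] using this
      exact Subtype.ext (QuotientGroup.eq.mpr hpq')
    · intro p q
      induction p using Quotient.ind
      induction q using Quotient.ind
      intro hpq
      have h1 : _ ∈ J := QuotientGroup.eq.mp (congrArg Subtype.val hpq)
      refine Quotient.sound (QuotientGroup.leftRel_apply.mpr ?_)
      simpa [Subgroup.mem_subgroupOf] using h1
  exact Subgroup.index_ne_zero_of_finite

/-- two dynamically quasiconvex subgroups with the same limit set of
cardinality at least two are commensurable. -/
theorem commensurable_of_same_limit_set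
    {G M : Type*} [Group G] [TopologicalSpace M] [CompactSpace M]
    [TopologicalSpace.MetrizableSpace M] [MulAction G M]
    (hconv : IsConvergenceAction G M)
    (h3 : ∃ a b c : M, a ≠ b ∧ a ≠ c ∧ b ≠ c)
    (H J : Subgroup G)
    (hdqcH : DynamicallyQuasiconvex G M H) (hdqcJ : DynamicallyQuasiconvex G M J)
    (hHJ : limitSet G M H = limitSet G M J)
    (hΛ : 2 ≤ (limitSet G M H).encard) :
    (H ⊓ J).relIndex H ≠ 0 ∧ (H ⊓ J).relIndex J ≠ 0 := by
  letI := TopologicalSpace.metrizableSpaceMetric M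
  obtain ⟨a, b, ha, hb, hab⟩ := Set.one_lt_encard_iff.mp (lt_of_lt_of_le (by norm_num) hΛ)
  have hcont := hconv.1
  have main : ∀ (K W : Subgroup G), DynamicallyQuasiconvex G M K →
      limitSet G M K = limitSet G M H →
      (∀ w ∈ W, ∀ x ∈ limitSet G M H, w • x ∈ limitSet G M H) →
      K.relIndex W ≠ 0 := by
    intro K W hdqc hlim hinv
    apply relindex_ne_zero_of_image_finite
    have hfin := hdqc {a} {b} isClosed_singleton isClosed_singleton
      (Set.disjoint_singleton.mpr hab)
    refine hfin.subset (Set.image_mono ?_)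
    intro w hw
    refine ⟨⟨a, ?_, rfl⟩, ⟨b, ?_, rfl⟩⟩
    · rw [Set.mem_smul_set_iff_inv_smul_mem, hlim]
      exact hinv _ (W.inv_mem hw) a ha
    · rw [Set.mem_smul_set_iff_inv_smul_mem, hlim]
      exact hinv _ (W.inv_mem hw) b hb
  have hinvH : ∀ w ∈ H, ∀ x ∈ limitSet G M H, w • x ∈ limitSet G M H :=
    fun w hw x hx => smul_mem_limitSet_aux hcont hw hx
  have hinvJ : ∀ w ∈ J, ∀ x ∈ limitSet G M H, w • x ∈ limitSet G M H := by
    rw [hHJ]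
    exact fun w hw x hx => smul_mem_limitSet_aux hcont hw hx
  constructor
  · rw [Subgroup.inf_relIndex_left]
    exact main J H hdqcJ hHJ.symm hinvH
  · rw [Subgroup.inf_relIndex_right]
    exact main H J hdqcH rfl hinvJ
end

section
/- Let G be a group with a convergence group action on a compact metrizable space M with at least three points, let H ≤ G with |Λ(H)| ≥ 2, and let L be the commensurator of H in G. Then L leaves Λ(H) invariant and Λ(L) = Λ(H). -/
open Pointwise Filter Topology Set

set_option linter.unusedSectionVars false
set_option maxHeartbeats 1000000

namespace CommLimAux

/-- A sequence of group elements with attracting point `a` and repelling point `b`: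
images of sequences converging away from `b` converge to `a`. -/
def CvAt {G M : Type*} [Group G] [TopologicalSpace M] [MulAction G M]
    (g : ℕ → G) (a b : M) : Prop :=
  ∀ (z : ℕ → M) (z₀ : M), z₀ ≠ b → Filter.Tendsto z Filter.atTop (nhds z₀) →
    Filter.Tendsto (fun n => g n • z n) Filter.atTop (nhds a)

variable {G M : Type*} [Group G] [MetricSpace M] [CompactSpace M] [MulAction G M]

section Basics

variable (hc : ∀ g : G, Continuous fun x : M => g • x)

theorem seq_compact (x : ℕ → M) :
    ∃ a, ∃ φ : ℕ → ℕ, StrictMono φ ∧ Tendsto (x ∘ φ) atTop (𝓝 a) := by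
  obtain ⟨a, -, φ, hφ, h⟩ := isCompact_univ.tendsto_subseq (x := x) (fun n => mem_univ _)
  exact ⟨a, φ, hφ, h⟩

/-- extend a subsequence-indexed sequence to a full sequence with the same limit -/
theorem CvAt.subseq {g : ℕ → G} {a b : M} (h : CvAt g a b) {φ : ℕ → ℕ}
    (hφ : StrictMono φ) : CvAt (g ∘ φ) a b := by
  intro z z₀ hz₀ hz
  classical
  set Z : ℕ → M := fun m => if hm : ∃ n, φ n = m then z hm.choose else z₀ with hZ
  have hZφ : ∀ n, Z (φ n) = z n := by
    intro n
    have hex : ∃ k, φ k = φ n := ⟨n, rfl⟩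
    have : hex.choose = n := hφ.injective hex.choose_spec
    simp only [hZ, dif_pos hex, this]
  have hZt : Tendsto Z atTop (𝓝 z₀) := by
    rw [tendsto_atTop_nhds] at hz ⊢
    intro U hU hUo
    obtain ⟨N, hN⟩ := hz U hU hUo
    refine ⟨φ N, fun m hm => ?_⟩
    by_cases hex : ∃ n, φ n = m
    · show (if hm : ∃ n, φ n = m then z hm.choose else z₀) ∈ U
      rw [dif_pos hex]
      apply hN
      have : φ N ≤ φ hex.choose := by rw [hex.choose_spec]; exact hm
      exact (hφ.le_iff_le).mp this
    · show (if hm : ∃ n, φ n = m then z hm.choose else z₀) ∈ U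
      rw [dif_neg hex]; exact hU
  have := h Z z₀ hz₀ hZt
  have h2 := this.comp (hφ.tendsto_atTop)
  convert h2 using 2 with n
  simp [Function.comp, hZφ n]

theorem ev_ne {u v : ℕ → M} {a b : M} (hab : a ≠ b) (hu : Tendsto u atTop (𝓝 a))
    (hv : Tendsto v atTop (𝓝 b)) : ∀ᶠ n in atTop, u n ≠ v n := by
  obtain ⟨U, V, hU, hV, haU, hbV, hUV⟩ := t2_separation hab
  have h1 : ∀ᶠ n in atTop, u n ∈ U := hu (hU.mem_nhds haU)
  have h2 : ∀ᶠ n in atTop, v n ∈ V := hv (hV.mem_nhds hbV)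
  filter_upwards [h1, h2] with n h1 h2
  intro h
  exact Set.disjoint_left.mp hUV h1 (h ▸ h2)

theorem triple_lemma
    (hp : ∀ K L : Set (M × M × M), IsCompact K → IsCompact L →
      (∀ t ∈ K ∪ L, t.1 ≠ t.2.1 ∧ t.1 ≠ t.2.2 ∧ t.2.1 ≠ t.2.2) →
      {g : G | ((g • K) ∩ L).Nonempty}.Finite)
    {g : ℕ → G} (hg : Function.Injective g)
    {u v w : ℕ → M} {u₀ v₀ w₀ u₁ v₁ w₁ : M}
    (d0 : u₀ ≠ v₀) (d1 : u₀ ≠ w₀) (d2 : v₀ ≠ w₀)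
    (e0 : u₁ ≠ v₁) (e1 : u₁ ≠ w₁) (e2 : v₁ ≠ w₁)
    (hu : Tendsto u atTop (𝓝 u₀)) (hv : Tendsto v atTop (𝓝 v₀)) (hw : Tendsto w atTop (𝓝 w₀))
    (hgu : Tendsto (fun n => g n • u n) atTop (𝓝 u₁))
    (hgv : Tendsto (fun n => g n • v n) atTop (𝓝 v₁))
    (hgw : Tendsto (fun n => g n • w n) atTop (𝓝 w₁)) : False := by
  have hev : ∀ᶠ n in atTop, u n ≠ v n ∧ u n ≠ w n ∧ v n ≠ w n ∧
      g n • u n ≠ g n • v n ∧ g n • u n ≠ g n • w n ∧ g n • v n ≠ g n • w n := by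
    filter_upwards [ev_ne d0 hu hv, ev_ne d1 hu hw, ev_ne d2 hv hw,
      ev_ne e0 hgu hgv, ev_ne e1 hgu hgw, ev_ne e2 hgv hgw] with n h1 h2 h3 h4 h5 h6
    exact ⟨h1, h2, h3, h4, h5, h6⟩
  obtain ⟨N, hN⟩ := eventually_atTop.mp hev
  have hsh : Tendsto (fun n : ℕ => n + N) atTop atTop := tendsto_add_atTop_nat N
  set U : ℕ → M × M × M := fun n => (u (n + N), v (n + N), w (n + N)) with hU
  set V : ℕ → M × M × M := fun n => (g (n + N) • u (n + N), g (n + N) • v (n + N),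
    g (n + N) • w (n + N)) with hV
  have hUt : Tendsto U atTop (𝓝 (u₀, v₀, w₀)) :=
    ((hu.comp hsh).prodMk_nhds ((hv.comp hsh).prodMk_nhds (hw.comp hsh)))
  have hVt : Tendsto V atTop (𝓝 (u₁, v₁, w₁)) :=
    ((hgu.comp hsh).prodMk_nhds ((hgv.comp hsh).prodMk_nhds (hgw.comp hsh)))
  have hKc : IsCompact (insert (u₀, v₀, w₀) (Set.range U)) := hUt.isCompact_insert_range
  have hLc : IsCompact (insert (u₁, v₁, w₁) (Set.range V)) := hVt.isCompact_insert_range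
  have hdist : ∀ t ∈ insert (u₀, v₀, w₀) (Set.range U) ∪ insert (u₁, v₁, w₁) (Set.range V),
      t.1 ≠ t.2.1 ∧ t.1 ≠ t.2.2 ∧ t.2.1 ≠ t.2.2 := by
    rintro t (ht | ht) <;> rcases ht with rfl | ⟨n, rfl⟩
    · exact ⟨d0, d1, d2⟩
    · obtain ⟨h1, h2, h3, -, -, -⟩ := hN (n + N) (Nat.le_add_left N n)
      exact ⟨h1, h2, h3⟩
    · exact ⟨e0, e1, e2⟩
    · obtain ⟨-, -, -, h4, h5, h6⟩ := hN (n + N) (Nat.le_add_left N n)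
      exact ⟨h4, h5, h6⟩
  have hfin := hp _ _ hKc hLc hdist
  have hmem : ∀ n : ℕ, g (n + N) ∈ {x : G | ((x • insert (u₀, v₀, w₀) (Set.range U)) ∩
      insert (u₁, v₁, w₁) (Set.range V)).Nonempty} := by
    intro n
    refine ⟨V n, ?_, Set.mem_insert_of_mem _ ⟨n, rfl⟩⟩
    have : U n ∈ insert (u₀, v₀, w₀) (Set.range U) := Set.mem_insert_of_mem _ ⟨n, rfl⟩
    have h2 := Set.smul_mem_smul_set (a := g (n + N)) this
    have h3 : g (n + N) • U n = V n := by simp [hU, hV, Prod.smul_mk]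
    rw [← h3]; exact h2
  have hinj : Function.Injective fun n : ℕ => g (n + N) :=
    hg.comp fun a b h => by omega
  exact (Set.infinite_of_injective_forall_mem hinj hmem) hfin

theorem pick3 {α : Type*} {x y z : α} (hxy : x ≠ y) (hxz : x ≠ z) (hyz : y ≠ z) (u v : α) :
    ∃ w, (w = x ∨ w = y ∨ w = z) ∧ w ≠ u ∧ w ≠ v := by
  classical
  by_cases hx : x ≠ u ∧ x ≠ v
  · exact ⟨x, Or.inl rfl, hx.1, hx.2⟩
  by_cases hy : y ≠ u ∧ y ≠ v
  · exact ⟨y, Or.inr (Or.inl rfl), hy.1, hy.2⟩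
  by_cases hz : z ≠ u ∧ z ≠ v
  · exact ⟨z, Or.inr (Or.inr rfl), hz.1, hz.2⟩
  exfalso
  push_neg at hx hy hz
  have hx' : x = u ∨ x = v := by
    by_cases h : x = u
    · exact Or.inl h
    · exact Or.inr (hx h)
  have hy' : y = u ∨ y = v := by
    by_cases h : y = u
    · exact Or.inl h
    · exact Or.inr (hy h)
  have hz' : z = u ∨ z = v := by
    by_cases h : z = u
    · exact Or.inl h
    · exact Or.inr (hz h)
  rcases hx' with h1 | h1 <;> rcases hy' with h2 | h2 <;> rcases hz' with h3 | h3 <;>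
    first
      | exact hxy (h1.trans h2.symm)
      | exact hxz (h1.trans h3.symm)
      | exact hyz (h2.trans h3.symm)

theorem boolPigeon : ∀ w : Fin 5 → Bool, ∃ i j k : Fin 5,
    i ≠ j ∧ i ≠ k ∧ j ≠ k ∧ w i = w j ∧ w j = w k := by decide

theorem pigeon {α : Type*} (v : Fin 5 → α)
    (hv : ∀ i j k : Fin 5, i ≠ j → i ≠ k → j ≠ k → v i = v j ∨ v i = v k ∨ v j = v k) :
    ∃ i j k : Fin 5, i ≠ j ∧ i ≠ k ∧ j ≠ k ∧ v i = v j ∧ v j = v k := by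
  classical
  by_cases hall : ∀ i j, v i = v j
  · exact ⟨0, 1, 2, by decide, by decide, by decide, hall 0 1, hall 1 2⟩
  push_neg at hall
  obtain ⟨i₀, j₀, hij⟩ := hall
  have hij' : i₀ ≠ j₀ := fun h => hij (h ▸ rfl)
  have dich : ∀ i, v i = v i₀ ∨ v i = v j₀ := by
    intro i
    by_cases h1 : i = i₀
    · exact Or.inl (h1 ▸ rfl)
    by_cases h2 : i = j₀
    · exact Or.inr (h2 ▸ rfl)
    rcases hv i i₀ j₀ h1 h2 hij' with h | h | h
    · exact Or.inl h
    · exact Or.inr h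
    · exact absurd h hij
  set w : Fin 5 → Bool := fun i => decide (v i = v i₀) with hw
  obtain ⟨i, j, k, h1, h2, h3, h4, h5⟩ := boolPigeon w
  have key : ∀ i' j' : Fin 5, w i' = w j' → v i' = v j' := by
    intro i' j' hww
    rcases Bool.eq_false_or_eq_true (w i') with hb | hb
    · have hb' : w j' = true := by rw [← hww]; exact hb
      rw [of_decide_eq_true hb, of_decide_eq_true hb']
    · have hb' : w j' = false := by rw [← hww]; exact hb
      have e1 : v i' = v j₀ := (dich i').resolve_left (of_decide_eq_false hb)
      have e2 : v j' = v j₀ := (dich j').resolve_left (of_decide_eq_false hb')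
      rw [e1, e2]
  exact ⟨i, j, k, h1, h2, h3, key i j h4, key j k h5⟩

theorem M_infinite
    (hp : ∀ K L : Set (M × M × M), IsCompact K → IsCompact L →
      (∀ t ∈ K ∪ L, t.1 ≠ t.2.1 ∧ t.1 ≠ t.2.2 ∧ t.2.1 ≠ t.2.2) →
      {g : G | ((g • K) ∩ L).Nonempty}.Finite)
    (h3 : ∃ a b c : M, a ≠ b ∧ a ≠ c ∧ b ≠ c)
    {g : ℕ → G} (hg : Function.Injective g) : Infinite M := by
  by_contra hfin
  rw [not_infinite_iff_finite] at hfin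
  set Θ : Set (M × M × M) := {t | t.1 ≠ t.2.1 ∧ t.1 ≠ t.2.2 ∧ t.2.1 ≠ t.2.2} with hΘ
  have hΘfin : Θ.Finite := Set.toFinite _
  have hcpt : IsCompact Θ := hΘfin.isCompact
  have hbad := hp Θ Θ hcpt hcpt (by
    intro t ht
    rcases ht with ht | ht <;> exact ht)
  obtain ⟨x, y, z, hxy, hxz, hyz⟩ := h3
  have hmem : ∀ n, g n ∈ {γ : G | ((γ • Θ) ∩ Θ).Nonempty} := by
    intro n
    have hθ : (x, y, z) ∈ Θ := ⟨hxy, hxz, hyz⟩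
    refine ⟨g n • (x, y, z), Set.smul_mem_smul_set hθ, ?_⟩
    have hi : Function.Injective (fun m : M => g n • m) := MulAction.injective (g n)
    exact ⟨fun h => hxy (hi h), fun h => hxz (hi h), fun h => hyz (hi h)⟩
  exact (Set.infinite_of_injective_forall_mem hg hmem) hbad

theorem subseq_fin : ∀ (k : ℕ) (x : Fin k → ℕ → M), ∃ φ : ℕ → ℕ, StrictMono φ ∧
    ∀ i, ∃ a, Tendsto (fun n => x i (φ n)) atTop (𝓝 a) := by
  intro k
  induction k with
  | zero => exact fun x => ⟨id, strictMono_id, fun i => i.elim0⟩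
  | succ k ih =>
    intro x
    obtain ⟨φ, hφ, hl⟩ := ih fun i n => x i.succ n
    obtain ⟨a, ψ, hψ, ha⟩ := seq_compact (fun n => x 0 (φ n))
    refine ⟨φ ∘ ψ, hφ.comp hψ, ?_⟩
    intro i
    refine Fin.cases ?_ ?_ i
    · exact ⟨a, ha⟩
    · intro j
      obtain ⟨a', ha'⟩ := hl j
      exact ⟨a', ha'.comp hψ.tendsto_atTop⟩

theorem main_lemma
    (hp : ∀ K L : Set (M × M × M), IsCompact K → IsCompact L →
      (∀ t ∈ K ∪ L, t.1 ≠ t.2.1 ∧ t.1 ≠ t.2.2 ∧ t.2.1 ≠ t.2.2) →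
      {g : G | ((g • K) ∩ L).Nonempty}.Finite)
    (h3 : ∃ a b c : M, a ≠ b ∧ a ≠ c ∧ b ≠ c)
    {g : ℕ → G} (hg : Function.Injective g) :
    ∃ (φ : ℕ → ℕ) (a b : M), StrictMono φ ∧ CvAt (fun n => g (φ n)) a b := by
  have hM : Infinite M := M_infinite hp h3 hg
  set e := Infinite.natEmbedding M with he
  set p : Fin 5 → M := fun i => e i.val with hpdef
  have hpd : ∀ i j : Fin 5, i ≠ j → p i ≠ p j := by
    intro i j hij h
    exact hij (Fin.ext (by exact_mod_cast e.injective h))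
  obtain ⟨φ₁, hφ₁, h1⟩ := subseq_fin 5 (fun i n => g n • p i)
  obtain ⟨φ₂, hφ₂, h2⟩ := subseq_fin 5 (fun i n => (g (φ₁ n))⁻¹ • p i)
  set φ : ℕ → ℕ := φ₁ ∘ φ₂ with hφdef
  have hφ : StrictMono φ := hφ₁.comp hφ₂
  have hginj : Function.Injective fun n => g (φ n) := hg.comp hφ.injective
  have hA' : ∀ i, ∃ a, Tendsto (fun n => g (φ n) • p i) atTop (𝓝 a) := by
    intro i
    obtain ⟨a, ha⟩ := h1 i
    exact ⟨a, ha.comp hφ₂.tendsto_atTop⟩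
  have hB' : ∀ i, ∃ b, Tendsto (fun n => (g (φ n))⁻¹ • p i) atTop (𝓝 b) := h2
  choose A hA using hA'
  choose B hB using hB'
  have hAc : ∀ i j k : Fin 5, i ≠ j → i ≠ k → j ≠ k →
      A i = A j ∨ A i = A k ∨ A j = A k := by
    intro i j k hij hik hjk
    by_contra hcon
    push_neg at hcon
    obtain ⟨c1, c2, c3⟩ := hcon
    exact triple_lemma hp hginj (hpd i j hij) (hpd i k hik) (hpd j k hjk) c1 c2 c3
      tendsto_const_nhds tendsto_const_nhds tendsto_const_nhds (hA i) (hA j) (hA k)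
  have hBc : ∀ i j k : Fin 5, i ≠ j → i ≠ k → j ≠ k →
      B i = B j ∨ B i = B k ∨ B j = B k := by
    intro i j k hij hik hjk
    by_contra hcon
    push_neg at hcon
    obtain ⟨c1, c2, c3⟩ := hcon
    have hinv : Function.Injective fun n => (g (φ n))⁻¹ := fun a b h => hginj (inv_injective h)
    exact triple_lemma hp hinv (hpd i j hij) (hpd i k hik) (hpd j k hjk) c1 c2 c3
      tendsto_const_nhds tendsto_const_nhds tendsto_const_nhds (hB i) (hB j) (hB k)
  obtain ⟨i1, i2, i3, di12, di13, di23, eA1, eA2⟩ := pigeon A hAc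
  obtain ⟨j1, j2, j3, dj12, dj13, dj23, eB1, eB2⟩ := pigeon B hBc
  set a : M := A i1 with hadef
  set b : M := B j1 with hbdef
  have hA1 : Tendsto (fun n => g (φ n) • p i1) atTop (𝓝 a) := hA i1
  have hA2 : Tendsto (fun n => g (φ n) • p i2) atTop (𝓝 a) := by
    rw [eA1]; exact hA i2
  have hA3 : Tendsto (fun n => g (φ n) • p i3) atTop (𝓝 a) := by
    rw [eA1, eA2]; exact hA i3
  have hB1 : Tendsto (fun n => (g (φ n))⁻¹ • p j1) atTop (𝓝 b) := hB j1
  have hB2 : Tendsto (fun n => (g (φ n))⁻¹ • p j2) atTop (𝓝 b) := by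
    rw [eB1]; exact hB j2
  have hB3 : Tendsto (fun n => (g (φ n))⁻¹ • p j3) atTop (𝓝 b) := by
    rw [eB1, eB2]; exact hB j3
  refine ⟨φ, a, b, hφ, ?_⟩
  intro z z₀ hz₀ hz
  by_contra hno
  rw [tendsto_atTop_nhds] at hno
  push_neg at hno
  obtain ⟨U, haU, hUo, hfreq⟩ := hno
  have hfr : ∃ᶠ n in atTop, g (φ n) • z n ∉ U := by
    rw [frequently_atTop]
    intro N
    obtain ⟨n, hn1, hn2⟩ := hfreq N
    exact ⟨n, hn1, hn2⟩
  obtain ⟨σ, hσ, hσP⟩ := Filter.extraction_of_frequently_atTop hfr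
  obtain ⟨c, ρ, hρ, hcl⟩ := seq_compact (fun n => g (φ (σ n)) • z (σ n))
  have hcU : c ∉ U := by
    have hclosed : IsClosed Uᶜ := hUo.isClosed_compl
    exact hclosed.mem_of_tendsto hcl (Eventually.of_forall fun n => hσP (ρ n))
  have hca : c ≠ a := fun h => hcU (h ▸ haU)
  set τ : ℕ → ℕ := σ ∘ ρ with hτdef
  have hτ : StrictMono τ := hσ.comp hρ
  obtain ⟨Q, hQor, hQz, hQb⟩ := pick3 (hpd i1 i2 di12) (hpd i1 i3 di13) (hpd i2 i3 di23) z₀ b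
  obtain ⟨P, hPor, hPc, hPa⟩ := pick3 (hpd j1 j2 dj12) (hpd j1 j3 dj13) (hpd j2 j3 dj23) c a
  have hQlim : Tendsto (fun n => g (φ (τ n)) • Q) atTop (𝓝 a) := by
    rcases hQor with h | h | h <;> rw [h]
    · exact hA1.comp hτ.tendsto_atTop
    · exact hA2.comp hτ.tendsto_atTop
    · exact hA3.comp hτ.tendsto_atTop
  have hPlim : Tendsto (fun n => (g (φ (τ n)))⁻¹ • P) atTop (𝓝 b) := by
    rcases hPor with h | h | h <;> rw [h]
    · exact hB1.comp hτ.tendsto_atTop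
    · exact hB2.comp hτ.tendsto_atTop
    · exact hB3.comp hτ.tendsto_atTop
  have hPconst : Tendsto (fun n => g (φ (τ n)) • ((g (φ (τ n)))⁻¹ • P)) atTop (𝓝 P) := by
    have : (fun n => g (φ (τ n)) • ((g (φ (τ n)))⁻¹ • P)) = fun _ => P := by
      funext n; rw [smul_inv_smul]
    rw [this]; exact tendsto_const_nhds
  have hzlim : Tendsto (fun n => z (τ n)) atTop (𝓝 z₀) := hz.comp hτ.tendsto_atTop
  have hgz : Tendsto (fun n => g (φ (τ n)) • z (τ n)) atTop (𝓝 c) := hcl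
  have hτinj : Function.Injective fun n => g (φ (τ n)) := fun n m h =>
    hτ.injective (hφ.injective (hg h))
  exact triple_lemma hp hτinj (fun h => hQz h.symm) hz₀ hQb hca
    (fun h => hPc h.symm) (fun h => hPa h.symm)
    hzlim tendsto_const_nhds hPlim hgz hQlim hPconst

theorem inv_match
    (hp : ∀ K L : Set (M × M × M), IsCompact K → IsCompact L →
      (∀ t ∈ K ∪ L, t.1 ≠ t.2.1 ∧ t.1 ≠ t.2.2 ∧ t.2.1 ≠ t.2.2) →
      {g : G | ((g • K) ∩ L).Nonempty}.Finite)
    (h3 : ∃ a b c : M, a ≠ b ∧ a ≠ c ∧ b ≠ c)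
    {g : ℕ → G} (hg : Function.Injective g) {a b : M} (hab : CvAt g a b) :
    ∃ φ : ℕ → ℕ, StrictMono φ ∧ CvAt (fun n => (g (φ n))⁻¹) b a := by
  have hgi : Function.Injective fun n => (g n)⁻¹ := fun n m h => hg (inv_injective h)
  obtain ⟨φ, a', b', hφ, hinv⟩ := main_lemma hp h3 hgi
  obtain ⟨x, y, z, hxy, hxz, hyz⟩ := h3
  have hsub : CvAt (fun n => g (φ n)) a b := hab.subseq hφ
  have ha'b : a' = b := by
    by_contra hne
    have key : ∀ w : M, w ≠ b' → w = a := by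
      intro w hw
      have h1 : Tendsto (fun n => (g (φ n))⁻¹ • w) atTop (𝓝 a') :=
        hinv (fun _ => w) w hw tendsto_const_nhds
      have h2 : Tendsto (fun n => g (φ n) • ((g (φ n))⁻¹ • w)) atTop (𝓝 a) :=
        hsub _ a' hne h1
      have h3' : (fun n => g (φ n) • ((g (φ n))⁻¹ • w)) = fun _ => w := by
        funext n; rw [smul_inv_smul]
      rw [h3'] at h2
      exact tendsto_nhds_unique tendsto_const_nhds h2
    obtain ⟨w1, -, hw1, -⟩ := pick3 hxy hxz hyz b' b'
    obtain ⟨w2, -, hw2, hw21⟩ := pick3 hxy hxz hyz b' w1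
    exact hw21 ((key w2 hw2).trans (key w1 hw1).symm)
  have hb'a : b' = a := by
    by_contra hne
    obtain ⟨z0, -, hz0b, hz0b'⟩ := pick3 hxy hxz hyz b b'
    have h1 : Tendsto (fun n => g (φ n) • z0) atTop (𝓝 a) :=
      hsub (fun _ => z0) z0 hz0b tendsto_const_nhds
    have h2 : Tendsto (fun n => (g (φ n))⁻¹ • (g (φ n) • z0)) atTop (𝓝 a') :=
      hinv _ a (fun h => hne h.symm) h1
    have h3' : (fun n => (g (φ n))⁻¹ • (g (φ n) • z0)) = fun _ => z0 := by
      funext n; rw [inv_smul_smul]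
    rw [h3'] at h2
    have : z0 = a' := tendsto_nhds_unique tendsto_const_nhds h2
    exact hz0b (this.trans ha'b)
  refine ⟨φ, hφ, ?_⟩
  intro w w₀ hw₀ hw
  rw [← ha'b]
  exact hinv w w₀ (by rw [hb'a]; exact hw₀) hw

theorem cvat_mem_limitSet
    (h3 : ∃ a b c : M, a ≠ b ∧ a ≠ c ∧ b ≠ c)
    {K : Subgroup G} {g : ℕ → G} (hmem : ∀ n, g n ∈ K)
    {a b : M} (h : CvAt g a b) : a ∈ limitSet G M K := by
  obtain ⟨x, y, z, hxy, hxz, hyz⟩ := h3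
  obtain ⟨s, -, hsb, -⟩ := pick3 hxy hxz hyz b b
  obtain ⟨t, -, htb, hts⟩ := pick3 hxy hxz hyz b s
  have hslim : Tendsto (fun n => g n • s) atTop (𝓝 a) := h _ s hsb tendsto_const_nhds
  have htlim : Tendsto (fun n => g n • t) atTop (𝓝 a) := h _ t htb tendsto_const_nhds
  have hdisj : ∀ n, g n • s ≠ a ∨ g n • t ≠ a := by
    intro n
    by_contra hcon
    push_neg at hcon
    exact hts (smul_left_cancel (g n) (hcon.2.trans hcon.1.symm))
  have hfr : (∃ᶠ n in atTop, g n • s ≠ a) ∨ (∃ᶠ n in atTop, g n • t ≠ a) := by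
    rw [← frequently_or_distrib]
    exact Filter.Eventually.frequently (Eventually.of_forall hdisj)
  rcases hfr with hf | hf
  · exact ⟨s, mem_closure_of_frequently_of_tendsto
      (hf.mono fun n hn => ⟨⟨g n, hmem n, rfl⟩, by simpa using hn⟩) hslim⟩
  · exact ⟨t, mem_closure_of_frequently_of_tendsto
      (hf.mono fun n hn => ⟨⟨g n, hmem n, rfl⟩, by simpa using hn⟩) htlim⟩

theorem exists_injective_orbit_seq {K : Subgroup G} {x m : M}
    (hx : x ∈ closure (((fun h : G => h • m) '' (K : Set G)) \ {x})) :
    ∃ g : ℕ → G, Function.Injective g ∧ (∀ n, g n ∈ K) ∧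
      (∀ n, g n • m ≠ x) ∧ Tendsto (fun n => g n • m) atTop (𝓝 x) := by
  classical
  have Q : ∀ (F : Finset G) (ε : ℝ), 0 < ε →
      ∃ h : G, h ∈ K ∧ h ∉ F ∧ h • m ≠ x ∧ dist (h • m) x < ε := by
    intro F ε hε
    set P : Finset ℝ := (F.image fun h => dist (h • m) x).filter (fun d => 0 < d) with hP
    set ε' : ℝ := if hne : P.Nonempty then min ε (P.min' hne) else ε with hε'
    have hε'pos : 0 < ε' := by
      rw [hε']
      split
      · next hne =>
        refine lt_min hε ?_
        have hmem := P.min'_mem hne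
        simp only [hP, Finset.mem_filter] at hmem
        exact hmem.2
      · exact hε
    have hε'le : ε' ≤ ε := by
      rw [hε']; split
      · exact min_le_left _ _
      · exact le_refl ε
    obtain ⟨y, hyS, hyd⟩ := Metric.mem_closure_iff.mp hx ε' hε'pos
    obtain ⟨⟨h, hhK, rfl⟩, hyx⟩ := hyS
    have hyx' : h • m ≠ x := by simpa using hyx
    refine ⟨h, hhK, ?_, hyx', by rw [dist_comm] at hyd; exact lt_of_lt_of_le hyd hε'le⟩
    intro hhF
    have hdin : dist (h • m) x ∈ P := by
      rw [hP, Finset.mem_filter]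
      exact ⟨Finset.mem_image_of_mem _ hhF, dist_pos.mpr hyx'⟩
    have hPne : P.Nonempty := ⟨_, hdin⟩
    have : ε' ≤ dist (h • m) x := by
      rw [hε', dif_pos hPne]
      exact le_trans (min_le_right _ _) (P.min'_le _ hdin)
    rw [dist_comm] at hyd
    exact absurd hyd (not_lt.mpr this)
  choose pick hK hF hne hd using Q
  set στ : ℕ → Finset G × G := fun n => Nat.rec
      (⟨∅, pick ∅ 1 one_pos⟩)
      (fun k ih => ⟨insert ih.2 ih.1,
        pick (insert ih.2 ih.1) (1 / (k + 2)) (by positivity)⟩) n with hστ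
  set g : ℕ → G := fun n => (στ n).2 with hg
  have hsucc : ∀ n, (στ (n + 1)).1 = insert (g n) (στ n).1 := fun n => rfl
  have hmono : ∀ k n, k ≤ n → (στ k).1 ⊆ (στ n).1 := by
    intro k n hkn
    induction n with
    | zero => simp_all
    | succ n ih =>
      rcases Nat.lt_or_ge k (n + 1) with h | h
      · refine (ih (Nat.lt_succ_iff.mp h)).trans ?_
        rw [hsucc]
        exact Finset.subset_insert _ _
      · have : k = n + 1 := le_antisymm hkn h
        subst this; exact subset_rfl
  have hnotmem : ∀ n, g n ∉ (στ n).1 := by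
    intro n
    cases n with
    | zero => exact hF _ _ _
    | succ k => exact hF _ _ _
  have hmemsucc : ∀ n, g n ∈ (στ (n + 1)).1 := by
    intro n; rw [hsucc]; exact Finset.mem_insert_self _ _
  have hinj : Function.Injective g := by
    have hne' : ∀ k n, k < n → g k ≠ g n := by
      intro k n hkn h
      have h1 : g k ∈ (στ n).1 := hmono (k + 1) n hkn (hmemsucc k)
      rw [h] at h1
      exact hnotmem n h1
    intro k n h
    rcases lt_trichotomy k n with hlt | heq | hlt
    · exact absurd h (hne' k n hlt)
    · exact heq
    · exact absurd h.symm (hne' n k hlt)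
  have hKmem : ∀ n, g n ∈ K := by
    intro n; cases n with
    | zero => exact hK _ _ _
    | succ k => exact hK _ _ _
  have hnex : ∀ n, g n • m ≠ x := by
    intro n; cases n with
    | zero => exact hne _ _ _
    | succ k => exact hne _ _ _
  have hdist : ∀ n, dist (g n • m) x < 1 / (n + 1) := by
    intro n; cases n with
    | zero =>
      have h0 := hd (∅ : Finset G) 1 one_pos
      simp only [Nat.cast_zero, zero_add, div_one]
      exact h0
    | succ k =>
      have h0 := hd (insert (στ k).2 (στ k).1) (1 / (k + 2)) (by positivity)
      have hcast : ((k : ℝ) + 2) = ((k + 1 : ℕ) : ℝ) + 1 := by push_cast; ring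
      rw [← hcast]
      exact h0
  refine ⟨g, hinj, hKmem, hnex, ?_⟩
  rw [Metric.tendsto_atTop]
  intro ε hε
  obtain ⟨N, hN⟩ := exists_nat_one_div_lt hε
  refine ⟨N, fun n hn => ?_⟩
  refine lt_of_lt_of_le (hdist n) (le_trans ?_ (le_of_lt hN))
  gcongr

theorem limitSet_attracts
    (hp : ∀ K L : Set (M × M × M), IsCompact K → IsCompact L →
      (∀ t ∈ K ∪ L, t.1 ≠ t.2.1 ∧ t.1 ≠ t.2.2 ∧ t.2.1 ≠ t.2.2) →
      {g : G | ((g • K) ∩ L).Nonempty}.Finite)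
    (h3 : ∃ a b c : M, a ≠ b ∧ a ≠ c ∧ b ≠ c)
    {K : Subgroup G} {x : M} (hx : x ∈ limitSet G M K) :
    ∃ g : ℕ → G, Function.Injective g ∧ (∀ n, g n ∈ K) ∧ ∃ b, CvAt g x b := by
  classical
  obtain ⟨m, hm⟩ := hx
  obtain ⟨f, hfinj, hfK, hfne, hflim⟩ := exists_injective_orbit_seq hm
  obtain ⟨φ, a₁, b₁, hφ, hcv⟩ := main_lemma hp h3 hfinj
  have hfφinj : Function.Injective fun n => f (φ n) := hfinj.comp hφ.injective
  have hflimφ : Tendsto (fun n => f (φ n) • m) atTop (𝓝 x) := hflim.comp hφ.tendsto_atTop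
  by_cases hmb : m ≠ b₁
  · have h1 : Tendsto (fun n => f (φ n) • m) atTop (𝓝 a₁) :=
      hcv (fun _ => m) m hmb tendsto_const_nhds
    have hxa : x = a₁ := tendsto_nhds_unique hflimφ h1
    exact ⟨fun n => f (φ n), hfφinj, fun n => hfK _, b₁, hxa ▸ hcv⟩
  push_neg at hmb
  have step : ∀ (used : Finset G) (k : ℕ), ∃ j, k < j ∧ f (φ j) * (f (φ k))⁻¹ ∉ used := by
    intro used k
    have hfin : ((fun j : ℕ => f (φ j) * (f (φ k))⁻¹) ⁻¹' (used : Set G)).Finite := by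
      apply Set.Finite.preimage ?_ used.finite_toSet
      intro a _ b _ h
      exact hfφinj (mul_right_cancel h)
    have hinf : ((fun j : ℕ => f (φ j) * (f (φ k))⁻¹) ⁻¹' (used : Set G))ᶜ.Infinite :=
      hfin.infinite_compl
    obtain ⟨j, hj1, hj2⟩ := hinf.exists_gt k
    exact ⟨j, hj2, hj1⟩
  choose pj hpj1 hpj2 using step
  set στ : ℕ → Finset G × ℕ := fun n => Nat.rec
      (⟨∅, pj ∅ 0⟩)
      (fun k ih => ⟨insert (f (φ ih.2) * (f (φ k))⁻¹) ih.1,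
        pj (insert (f (φ ih.2) * (f (φ k))⁻¹) ih.1) (k + 1)⟩) n with hστ
  set jj : ℕ → ℕ := fun k => (στ k).2 with hjj
  set g' : ℕ → G := fun k => f (φ (jj k)) * (f (φ k))⁻¹ with hg'
  have hjgt : ∀ k, k < jj k := by
    intro k; cases k with
    | zero => exact hpj1 _ _
    | succ k => exact hpj1 _ _
  have hnotmem : ∀ k, g' k ∉ (στ k).1 := by
    intro k; cases k with
    | zero => exact hpj2 _ _
    | succ k => exact hpj2 _ _
  have hsucc : ∀ k, (στ (k + 1)).1 = insert (g' k) (στ k).1 := fun k => rfl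
  have hmono : ∀ k n, k ≤ n → (στ k).1 ⊆ (στ n).1 := by
    intro k n hkn
    induction n with
    | zero => simp_all
    | succ n ih =>
      rcases Nat.lt_or_ge k (n + 1) with h | h
      · refine (ih (Nat.lt_succ_iff.mp h)).trans ?_
        rw [hsucc]
        exact Finset.subset_insert _ _
      · have : k = n + 1 := le_antisymm hkn h
        subst this; exact subset_rfl
  have hg'inj : Function.Injective g' := by
    have hne' : ∀ k n, k < n → g' k ≠ g' n := by
      intro k n hkn h
      have h1 : g' k ∈ (στ n).1 := by
        refine hmono (k + 1) n hkn ?_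
        rw [hsucc]; exact Finset.mem_insert_self _ _
      rw [h] at h1
      exact hnotmem n h1
    intro k n h
    rcases lt_trichotomy k n with hlt | heq | hlt
    · exact absurd h (hne' k n hlt)
    · exact heq
    · exact absurd h.symm (hne' n k hlt)
  have hg'K : ∀ k, g' k ∈ K := fun k => K.mul_mem (hfK _) (K.inv_mem (hfK _))
  have hg'act : ∀ k, g' k • (f (φ k) • m) = f (φ (jj k)) • m := by
    intro k
    rw [hg']
    rw [mul_smul, inv_smul_smul]
  have hjtend : Tendsto jj atTop atTop :=
    tendsto_atTop_mono (fun k => (hjgt k).le) tendsto_id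
  have hujj : Tendsto (fun k => f (φ (jj k)) • m) atTop (𝓝 x) := hflimφ.comp hjtend
  obtain ⟨ψ, A, B, hψ, hcv2⟩ := main_lemma hp h3 hg'inj
  by_cases hxB : x ≠ B
  · have hdom : Tendsto (fun k => f (φ (ψ k)) • m) atTop (𝓝 x) := hflimφ.comp hψ.tendsto_atTop
    have him : Tendsto (fun k => g' (ψ k) • (f (φ (ψ k)) • m)) atTop (𝓝 A) :=
      hcv2 _ x hxB hdom
    have him' : Tendsto (fun k => f (φ (jj (ψ k))) • m) atTop (𝓝 A) := by
      refine him.congr fun k => ?_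
      exact hg'act (ψ k)
    have him'' : Tendsto (fun k => f (φ (jj (ψ k))) • m) atTop (𝓝 x) :=
      hujj.comp hψ.tendsto_atTop
    have hxA : A = x := tendsto_nhds_unique him' him''
    exact ⟨fun k => g' (ψ k), hg'inj.comp hψ.injective, fun k => hg'K _, B, hxA ▸ hcv2⟩
  push_neg at hxB
  obtain ⟨ρ, hρ, hcv3⟩ := inv_match hp h3 (hg'inj.comp hψ.injective) hcv2
  refine ⟨fun n => (g' (ψ (ρ n)))⁻¹, ?_, fun n => K.inv_mem (hg'K _), A, ?_⟩
  · intro a b h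
    exact hρ.injective (hψ.injective (hg'inj (inv_injective h)))
  · rw [hxB]
    exact hcv3

theorem build_inj_seq {α : Type*} [DecidableEq α] (P : ℕ → α → Prop)
    (hstep : ∀ (used : Finset α) (i : ℕ), ∃ h : α, h ∉ used ∧ P i h) :
    ∃ F : ℕ → α, Function.Injective F ∧ ∀ i, P i (F i) := by
  classical
  choose pick hp1 hp2 using hstep
  set στ : ℕ → Finset α × α := fun n => Nat.rec
      (⟨∅, pick ∅ 0⟩)
      (fun k ih => ⟨insert ih.2 ih.1, pick (insert ih.2 ih.1) (k + 1)⟩) n with hστ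
  set F : ℕ → α := fun n => (στ n).2 with hF
  have hsucc : ∀ n, (στ (n + 1)).1 = insert (F n) (στ n).1 := fun n => rfl
  have hmono : ∀ k n, k ≤ n → (στ k).1 ⊆ (στ n).1 := by
    intro k n hkn
    induction n with
    | zero => simp_all
    | succ n ih =>
      rcases Nat.lt_or_ge k (n + 1) with h | h
      · refine (ih (Nat.lt_succ_iff.mp h)).trans ?_
        rw [hsucc]
        exact Finset.subset_insert _ _
      · have : k = n + 1 := le_antisymm hkn h
        subst this; exact subset_rfl
  have hnotmem : ∀ n, F n ∉ (στ n).1 := by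
    intro n; cases n with
    | zero => exact hp1 _ _
    | succ k => exact hp1 _ _
  have hinj : Function.Injective F := by
    have hne' : ∀ k n, k < n → F k ≠ F n := by
      intro k n hkn h
      have h1 : F k ∈ (στ n).1 := by
        refine hmono (k + 1) n hkn ?_
        rw [hsucc]; exact Finset.mem_insert_self _ _
      rw [h] at h1
      exact hnotmem n h1
    intro k n h
    rcases lt_trichotomy k n with hlt | heq | hlt
    · exact absurd h (hne' k n hlt)
    · exact heq
    · exact absurd h.symm (hne' n k hlt)
  refine ⟨F, hinj, ?_⟩
  intro i; cases i with
  | zero => exact hp2 _ _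
  | succ k => exact hp2 _ _

theorem cvat_limit_closed
    (hp : ∀ K L : Set (M × M × M), IsCompact K → IsCompact L →
      (∀ t ∈ K ∪ L, t.1 ≠ t.2.1 ∧ t.1 ≠ t.2.2 ∧ t.2.1 ≠ t.2.2) →
      {g : G | ((g • K) ∩ L).Nonempty}.Finite)
    (h3 : ∃ a b c : M, a ≠ b ∧ a ≠ c ∧ b ≠ c)
    {K : Subgroup G} {y : ℕ → M} {x : M}
    (hy : ∀ k, ∃ g : ℕ → G, Function.Injective g ∧ (∀ n, g n ∈ K) ∧ ∃ b, CvAt g (y k) b)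
    (hyx : Tendsto y atTop (𝓝 x)) :
    ∃ g : ℕ → G, Function.Injective g ∧ (∀ n, g n ∈ K) ∧ ∃ b, CvAt g x b := by
  classical
  have h3' := h3
  choose gg hginj hgK bb hcv using hy
  obtain ⟨p1, p2, p3, h12, h13, h23⟩ := h3
  have hpair : ∀ k, ∃ s t : M, s ≠ t ∧ s ≠ bb k ∧ t ≠ bb k ∧
      (s = p1 ∨ s = p2 ∨ s = p3) ∧ (t = p1 ∨ t = p2 ∨ t = p3) := by
    intro k
    obtain ⟨s, hso, hsb, -⟩ := pick3 h12 h13 h23 (bb k) (bb k)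
    obtain ⟨t, hto, htb, hts⟩ := pick3 h12 h13 h23 (bb k) s
    exact ⟨s, t, fun h => hts h.symm, hsb, htb, hso, hto⟩
  choose ss tt hst hsb htb hsopt htopt using hpair
  set dec : Fin 3 → M := fun i => if i = 0 then p1 else if i = 1 then p2 else p3 with hdec
  set enc : M → Fin 3 := fun z => if z = p1 then 0 else if z = p2 then 1 else 2 with henc
  have hde : ∀ z, (z = p1 ∨ z = p2 ∨ z = p3) → dec (enc z) = z := by
    intro z hz
    rcases hz with rfl | rfl | rfl
    · simp [hdec, henc]
    · simp [hdec, henc, Ne.symm h12]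
    · simp [hdec, henc, Ne.symm h13, Ne.symm h23]
  set c : ℕ → Fin 3 × Fin 3 := fun k => (enc (ss k), enc (tt k)) with hcdef
  obtain ⟨v, hv⟩ := Finite.exists_infinite_fiber c
  have hI : (c ⁻¹' {v}).Infinite := Set.infinite_coe_iff.mp hv
  set s : M := dec v.1 with hs
  set t : M := dec v.2 with ht
  have hmemI : ∀ k ∈ c ⁻¹' {v}, ss k = s ∧ tt k = t := by
    intro k hk
    have hck : c k = v := hk
    constructor
    · rw [hs, ← hck]
      exact (hde (ss k) (hsopt k)).symm
    · rw [ht, ← hck]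
      exact (hde (tt k) (htopt k)).symm
  set eI := hI.natEmbedding with heI
  set κ : ℕ → ℕ := fun i => (eI i : ℕ) with hκ
  have hκI : ∀ i, κ i ∈ c ⁻¹' {v} := fun i => (eI i).2
  have hκinj : Function.Injective κ := fun i j h => eI.injective (Subtype.ext h)
  have hκtend : Tendsto κ atTop atTop := by
    rw [← Nat.cofinite_eq_atTop]
    exact hκinj.tendsto_cofinite
  have hsts : s ≠ t := by
    obtain ⟨k, hk⟩ := hI.nonempty
    obtain ⟨e1, e2⟩ := hmemI k hk
    rw [← e1, ← e2]; exact hst k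
  have hsbk : ∀ i, s ≠ bb (κ i) := by
    intro i
    obtain ⟨e1, -⟩ := hmemI (κ i) (hκI i)
    rw [← e1]; exact hsb (κ i)
  have htbk : ∀ i, t ≠ bb (κ i) := by
    intro i
    obtain ⟨-, e2⟩ := hmemI (κ i) (hκI i)
    rw [← e2]; exact htb (κ i)
  have hstep : ∀ (used : Finset G) (i : ℕ), ∃ h : G, h ∉ used ∧ (h ∈ K ∧
      dist (h • s) (y (κ i)) < 1 / (i + 1) ∧ dist (h • t) (y (κ i)) < 1 / (i + 1)) := by
    intro used i
    have h1 : Tendsto (fun n => gg (κ i) n • s) atTop (𝓝 (y (κ i))) :=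
      hcv (κ i) _ s (hsbk i) tendsto_const_nhds
    have h2 : Tendsto (fun n => gg (κ i) n • t) atTop (𝓝 (y (κ i))) :=
      hcv (κ i) _ t (htbk i) tendsto_const_nhds
    have hev : ∀ᶠ n in atTop, dist (gg (κ i) n • s) (y (κ i)) < 1 / (i + 1) ∧
        dist (gg (κ i) n • t) (y (κ i)) < 1 / (i + 1) := by
      have hpos : (0 : ℝ) < 1 / (i + 1) := by positivity
      have hb1 := h1 (Metric.ball_mem_nhds (y (κ i)) hpos)
      have hb2 := h2 (Metric.ball_mem_nhds (y (κ i)) hpos)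
      filter_upwards [hb1, hb2] with n hn1 hn2
      exact ⟨hn1, hn2⟩
    obtain ⟨N, hN⟩ := eventually_atTop.mp hev
    have hfin : ((gg (κ i)) ⁻¹' (used : Set G)).Finite :=
      Set.Finite.preimage (fun a _ b _ h => hginj (κ i) h) used.finite_toSet
    obtain ⟨n, hn1, hn2⟩ := hfin.infinite_compl.exists_gt N
    exact ⟨gg (κ i) n, hn1, hgK _ _, (hN n hn2.le).1, (hN n hn2.le).2⟩
  obtain ⟨F, hFinj, hFP⟩ := build_inj_seq _ hstep
  have hFK : ∀ i, F i ∈ K := fun i => (hFP i).1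
  have hyκ : Tendsto (fun i => y (κ i)) atTop (𝓝 x) := hyx.comp hκtend
  have hslim : Tendsto (fun i => F i • s) atTop (𝓝 x) := by
    rw [tendsto_iff_dist_tendsto_zero]
    apply squeeze_zero (fun i => dist_nonneg)
      (g := fun i => 1 / (i + 1) + dist (y (κ i)) x)
    · intro i
      calc dist (F i • s) x ≤ dist (F i • s) (y (κ i)) + dist (y (κ i)) x := dist_triangle _ _ _
        _ ≤ 1 / (i + 1) + dist (y (κ i)) x := by
            have := (hFP i).2.1
            linarith
    · have ha : Tendsto (fun i : ℕ => 1 / ((i : ℝ) + 1)) atTop (𝓝 0) :=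
        tendsto_one_div_add_atTop_nhds_zero_nat
      have hb : Tendsto (fun i => dist (y (κ i)) x) atTop (𝓝 0) :=
        tendsto_iff_dist_tendsto_zero.mp hyκ
      simpa using ha.add hb
  have htlim : Tendsto (fun i => F i • t) atTop (𝓝 x) := by
    rw [tendsto_iff_dist_tendsto_zero]
    apply squeeze_zero (fun i => dist_nonneg)
      (g := fun i => 1 / (i + 1) + dist (y (κ i)) x)
    · intro i
      calc dist (F i • t) x ≤ dist (F i • t) (y (κ i)) + dist (y (κ i)) x := dist_triangle _ _ _
        _ ≤ 1 / (i + 1) + dist (y (κ i)) x := by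
            have := (hFP i).2.2
            linarith
    · have ha : Tendsto (fun i : ℕ => 1 / ((i : ℝ) + 1)) atTop (𝓝 0) :=
        tendsto_one_div_add_atTop_nhds_zero_nat
      have hb : Tendsto (fun i => dist (y (κ i)) x) atTop (𝓝 0) :=
        tendsto_iff_dist_tendsto_zero.mp hyκ
      simpa using ha.add hb
  obtain ⟨ψ, A, B, hψ, hcv2⟩ := main_lemma hp h3' hFinj
  have hcase : s ≠ B ∨ t ≠ B := by
    by_contra h
    push_neg at h
    exact hsts (h.1.trans h.2.symm)
  rcases hcase with hsB | htB
  · have hl1 : Tendsto (fun i => F (ψ i) • s) atTop (𝓝 A) :=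
      hcv2 (fun _ => s) s hsB tendsto_const_nhds
    have hl2 : Tendsto (fun i => F (ψ i) • s) atTop (𝓝 x) := hslim.comp hψ.tendsto_atTop
    have hxA : A = x := tendsto_nhds_unique hl1 hl2
    exact ⟨fun i => F (ψ i), hFinj.comp hψ.injective, fun i => hFK _, B, hxA ▸ hcv2⟩
  · have hl1 : Tendsto (fun i => F (ψ i) • t) atTop (𝓝 A) :=
      hcv2 (fun _ => t) t htB tendsto_const_nhds
    have hl2 : Tendsto (fun i => F (ψ i) • t) atTop (𝓝 x) := htlim.comp hψ.tendsto_atTop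
    have hxA : A = x := tendsto_nhds_unique hl1 hl2
    exact ⟨fun i => F (ψ i), hFinj.comp hψ.injective, fun i => hFK _, B, hxA ▸ hcv2⟩

theorem cover_of_relindex_ne_zero {K J : Subgroup G} (h : K.relIndex J ≠ 0) :
    ∃ T : Set G, T.Finite ∧ ∀ j ∈ J, ∃ k c : G, k ∈ K ∧ k ∈ J ∧ c ∈ T ∧ j = k * c := by
  classical
  set W := K.subgroupOf J with hW
  have hfin : Finite (↥J ⧸ W) := by
    rw [Subgroup.relIndex, Subgroup.index_eq_card] at h
    exact (Nat.card_ne_zero.mp h).2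
  refine ⟨Set.range (fun q : ↥J ⧸ W => ((Quotient.out q : ↥J) : G)⁻¹), Set.finite_range _, ?_⟩
  intro j hj
  set jJ : ↥J := ⟨j, hj⟩ with hjJ
  obtain ⟨w, hw⟩ := QuotientGroup.mk_out_eq_mul W (jJ⁻¹)
  -- hw : (QuotientGroup.mk jJ⁻¹).out = jJ⁻¹ * w
  have hkey : jJ = (w : ↥J) * ((QuotientGroup.mk (s := W) jJ⁻¹).out)⁻¹ := by
    rw [hw]
    group
  refine ⟨((w : ↥J) : G), (((QuotientGroup.mk (s := W) jJ⁻¹).out : ↥J) : G)⁻¹, ?_, ?_, ?_, ?_⟩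
  · exact Subgroup.mem_subgroupOf.mp w.2
  · exact (w : ↥J).2
  · exact ⟨QuotientGroup.mk (s := W) jJ⁻¹, rfl⟩
  · have := congrArg (fun z : ↥J => (z : G)) hkey
    simpa using this

theorem smul_limitSet_subset (hc : ∀ g : G, Continuous fun x : M => g • x)
    {H : Subgroup G} {g : G} (hg : g ∈ Subgroup.Commensurable.commensurator H) :
    g • limitSet G M H ⊆ limitSet G M H := by
  haveI : ContinuousConstSMul G M := ⟨hc⟩
  rintro _ ⟨x, hx, rfl⟩
  obtain ⟨m, hm⟩ := hx
  set J : Subgroup G := ConjAct.toConjAct g • H with hJ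
  set S : Set M := (fun h : G => h • m) '' (H : Set G) with hS
  have h1 : g • x ∈ closure ((g • S) \ {g • x}) := by
    have h2 : g • x ∈ g • closure (S \ {x}) := Set.smul_mem_smul_set hm
    rw [← closure_smul, Set.smul_set_sdiff, Set.smul_set_singleton] at h2
    exact h2
  have hgs : g • S = (fun γ : G => γ • (g • m)) '' (J : Set G) := by
    ext z
    constructor
    · rintro ⟨-, ⟨h, hh, rfl⟩, rfl⟩
      refine ⟨g * h * g⁻¹, ?_, ?_⟩
      · rw [hJ]
        rw [SetLike.mem_coe, Subgroup.mem_smul_pointwise_iff_exists]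
        exact ⟨h, hh, by rw [ConjAct.smul_def, ConjAct.ofConjAct_toConjAct]⟩
      · simp only [← mul_smul]
        rw [inv_mul_cancel_right]
    · rintro ⟨γ, hγ, rfl⟩
      rw [hJ, SetLike.mem_coe, Subgroup.mem_smul_pointwise_iff_exists] at hγ
      obtain ⟨h, hh, rfl⟩ := hγ
      rw [ConjAct.smul_def, ConjAct.ofConjAct_toConjAct]
      refine ⟨h • m, ⟨h, hh, rfl⟩, ?_⟩
      simp only [← mul_smul]
      rw [inv_mul_cancel_right]
  have hrel : H.relIndex J ≠ 0 := ((Subgroup.Commensurable.commensurator_mem_iff H g).mp hg).2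
  obtain ⟨T, hTfin, hTcov⟩ := cover_of_relindex_ne_zero hrel
  have hsub : (g • S) \ {g • x} ⊆
      ⋃ c ∈ T, ((fun h : G => h • (c • g • m)) '' (H : Set G)) \ {g • x} := by
    rintro z ⟨hz1, hz2⟩
    rw [hgs] at hz1
    obtain ⟨γ, hγ, rfl⟩ := hz1
    obtain ⟨k, c, hkH, hkJ, hcT, rfl⟩ := hTcov γ hγ
    refine Set.mem_biUnion hcT ⟨⟨k, hkH, (mul_smul k c (g • m)).symm⟩, hz2⟩
  have hclosed : IsClosed (⋃ c ∈ T,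
      closure ((((fun h : G => h • (c • g • m)) '' (H : Set G)) \ {g • x}))) :=
    hTfin.isClosed_biUnion fun c _ => isClosed_closure
  have h3 : g • x ∈ ⋃ c ∈ T,
      closure ((((fun h : G => h • (c • g • m)) '' (H : Set G)) \ {g • x})) := by
    refine closure_minimal ?_ hclosed h1
    refine hsub.trans ?_
    exact Set.iUnion₂_mono fun c _ => subset_closure
  obtain ⟨c, -, hcx⟩ := Set.mem_iUnion₂.mp h3
  exact ⟨c • g • m, hcx⟩

theorem smul_limitSet_eq (hc : ∀ g : G, Continuous fun x : M => g • x)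
    {H : Subgroup G} {g : G} (hg : g ∈ Subgroup.Commensurable.commensurator H) :
    g • limitSet G M H = limitSet G M H := by
  apply subset_antisymm (smul_limitSet_subset hc hg)
  have h2 := smul_limitSet_subset hc ((Subgroup.Commensurable.commensurator H).inv_mem hg)
  intro x hx
  exact ⟨g⁻¹ • x, h2 ⟨x, hx, rfl⟩, smul_inv_smul g x⟩

theorem limitSet_mono {H K : Subgroup G} (h : H ≤ K) :
    limitSet G M H ⊆ limitSet G M K := by
  rintro x ⟨m, hm⟩
  refine ⟨m, ?_⟩
  refine closure_mono (Set.diff_subset_diff_left (Set.image_mono ?_)) hm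
  exact fun a ha => h ha

theorem le_commensurator (H : Subgroup G) : H ≤ Subgroup.Commensurable.commensurator H := by
  intro h hh
  rw [Subgroup.Commensurable.commensurator_mem_iff]
  have heq : ConjAct.toConjAct h • H = H := by
    ext x
    rw [Subgroup.mem_smul_pointwise_iff_exists]
    constructor
    · rintro ⟨s, hs, rfl⟩
      rw [ConjAct.smul_def, ConjAct.ofConjAct_toConjAct]
      exact H.mul_mem (H.mul_mem hh hs) (H.inv_mem hh)
    · intro hx
      refine ⟨h⁻¹ * x * h, H.mul_mem (H.mul_mem (H.inv_mem hh) hx) hh, ?_⟩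
      rw [ConjAct.smul_def, ConjAct.ofConjAct_toConjAct]
      group
  rw [heq]

end Basics

end CommLimAux

/-- the commensurator `L` of a subgroup `H` with `|Λ(H)| ≥ 2` leaves
`Λ(H)` invariant, and `Λ(L) = Λ(H)`. -/
theorem commensurator_limit_set
    {G M : Type*} [Group G] [TopologicalSpace M] [CompactSpace M]
    [TopologicalSpace.MetrizableSpace M] [MulAction G M]
    (hconv : IsConvergenceAction G M)
    (h3 : ∃ a b c : M, a ≠ b ∧ a ≠ c ∧ b ≠ c)
    (H : Subgroup G)
    (hΛ : 2 ≤ (limitSet G M H).encard) :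
    (∀ g ∈ Subgroup.Commensurable.commensurator H, g • limitSet G M H = limitSet G M H) ∧
      limitSet G M (Subgroup.Commensurable.commensurator H) = limitSet G M H := by
  letI : MetricSpace M := TopologicalSpace.metrizableSpaceMetric M
  obtain ⟨hc, hp⟩ := hconv
  have hinv : ∀ g ∈ Subgroup.Commensurable.commensurator H,
      g • limitSet G M H = limitSet G M H :=
    fun g hg => CommLimAux.smul_limitSet_eq hc hg
  refine ⟨hinv, ?_⟩
  apply subset_antisymm
  · intro x hx
    obtain ⟨g, hginj, hgL, b, hcv⟩ := CommLimAux.limitSet_attracts hp h3 hx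
    have h2 : 1 < (limitSet G M H).encard := lt_of_lt_of_le (by norm_num) hΛ
    obtain ⟨r, hrΛ, hrb⟩ := Set.exists_ne_of_one_lt_encard h2 b
    have hy : ∀ n, g n • r ∈ limitSet G M H := by
      intro n
      rw [← hinv (g n) (hgL n)]
      exact Set.smul_mem_smul_set hrΛ
    have hylim : Filter.Tendsto (fun n => g n • r) Filter.atTop (nhds x) :=
      hcv (fun _ => r) r hrb tendsto_const_nhds
    have hdata : ∀ n, ∃ gs : ℕ → G, Function.Injective gs ∧ (∀ k, gs k ∈ H) ∧
        ∃ b', CommLimAux.CvAt gs (g n • r) b' :=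
      fun n => CommLimAux.limitSet_attracts hp h3 (hy n)
    obtain ⟨gs, hgsinj, hgsH, b', hcv'⟩ := CommLimAux.cvat_limit_closed hp h3 hdata hylim
    exact CommLimAux.cvat_mem_limitSet h3 hgsH hcv'
  · exact CommLimAux.limitSet_mono (CommLimAux.le_commensurator H)
end
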